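/- Let (X, p̄) be a stratified perverse space. Equip ℝ × X with the product filtration and the perversity (still denoted p̄) pulled back along the projection. Then for each fixed z ∈ ℝ the inclusion ι_z : X → ℝ × X, x ↦ (z, x), and the projection p_X : ℝ × X → X, (z,x) ↦ x, induce isomorphisms H_k^{p̄}(ℝ × X;G) ≅ H_k^{p̄}(X;G) for all k. -/

import Mathlib

noncomputable section
open Set

universe u v w


/-- A filtered space of formal dimension `dim` : closed subspaces
`∅ = X_{-1} ⊆ X_0 ⊆ … ⊆ X_n = X` with `X_n \ X_{n-1} ≠ ∅`. -/
structure FilteredSpace (X : Type u) [TopologicalSpace X] : Type u where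
  dim : ℕ
  filt : ℤ → Set X
  filt_neg : ∀ i : ℤ, i < 0 → filt i = ∅
  filt_mono : Monotone filt
  filt_closed : ∀ i, IsClosed (filt i)
  filt_top : ∀ i : ℤ, (dim : ℤ) ≤ i → filt i = Set.univ
  reg_nonempty : (filt dim \ filt ((dim : ℤ) - 1)).Nonempty

namespace FilteredSpace

variable {X : Type u} {Y : Type v} [TopologicalSpace X] [TopologicalSpace Y]

/-- `S` is a stratum of formal dimension `i` : a connected component of `X_i \ X_{i-1}`. -/
def IsStratumDim (F : FilteredSpace X) (S : Set X) (i : ℤ) : Prop :=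
  ∃ x ∈ F.filt i \ F.filt (i-1), S = connectedComponentIn (F.filt i \ F.filt (i-1)) x

/-- `S` is a stratum of the filtered space. -/
def IsStratum (F : FilteredSpace X) (S : Set X) : Prop := ∃ i, F.IsStratumDim S i

open Classical in
/-- The formal dimension of a stratum. -/
def stratumDim (F : FilteredSpace X) (S : Set X) : ℤ :=
  if h : ∃ i, F.IsStratumDim S i then h.choose else 0

/-- The codimension of a stratum : `dim X - dim S`. -/
def codim (F : FilteredSpace X) (S : Set X) : ℤ := (F.dim : ℤ) - F.stratumDim S

/-- A regular stratum : one contained in `X_n \ X_{n-1}`. -/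
def IsRegularStratum (F : FilteredSpace X) (S : Set X) : Prop :=
  F.IsStratumDim S (F.dim : ℤ)

/-- A singular stratum. -/
def IsSingularStratum (F : FilteredSpace X) (S : Set X) : Prop :=
  F.IsStratum S ∧ ¬ F.IsRegularStratum S

/-- The singular set `Σ = X_{n-1}`. -/
def sing (F : FilteredSpace X) : Set X := F.filt ((F.dim : ℤ) - 1)

/-- A perversity on a filtered space : a function on strata (here, defined on all
subsets) vanishing on regular strata. -/
def IsPerversity (F : FilteredSpace X) (p : Set X → ℤ) : Prop :=
  ∀ S, F.IsRegularStratum S → p S = 0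

/-- The top perversity `t̄ (S) = codim S - 2`. -/
def topPerv (F : FilteredSpace X) : Set X → ℤ := fun S => F.codim S - 2

open Classical in
/-- The dual perversity `D p̄ = t̄ - p̄` (vanishing on regular strata). -/
def dualPerv (F : FilteredSpace X) (p : Set X → ℤ) : Set X → ℤ :=
  fun S => if F.IsRegularStratum S then 0 else F.codim S - 2 - p S

/-- A stratified map between filtered spaces: each stratum of the source is sent into
a stratum of the target of smaller or equal codimension. -/
def IsStratifiedMap (F : FilteredSpace X) (F' : FilteredSpace Y) (f : X → Y) : Prop :=
  Continuous f ∧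
    ∀ S, F.IsStratum S → ∃ T, F'.IsStratum T ∧ f '' S ⊆ T ∧ F'.codim T ≤ F.codim S

end FilteredSpace

/-! ## Topological simplices, filtered simplices -/

/-- The standard topological `m`-simplex. -/
abbrev TSimp (m : ℕ) : Set (Fin (m+1) → ℝ) := stdSimplex ℝ (Fin (m+1))

/-- The number of nonzero barycentric coordinates of a point of the `m`-simplex;
`t` belongs to the `d`-skeleton iff `suppCard t ≤ d + 1`. -/
def suppCard {m : ℕ} (t : TSimp m) : ℕ :=
  @Finset.card _ (@Finset.filter _ (fun j => (t : Fin (m+1) → ℝ) j ≠ 0)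
    (Classical.decPred _) Finset.univ)

/-- The `j`-th face embedding of standard simplices. -/
def faceMap (m : ℕ) (j : Fin (m+2)) : C(TSimp m, TSimp (m+1)) where
  toFun t := ⟨Fin.insertNth j 0 t.1, by
    refine ⟨fun k => ?_, ?_⟩
    · refine Fin.succAboveCases j ?_ ?_ k
      · rw [Fin.insertNth_apply_same]
      · intro l; rw [Fin.insertNth_apply_succAbove]; exact t.2.1 l
    · rw [Fin.sum_univ_succAbove _ j, Fin.insertNth_apply_same]
      simp only [Fin.insertNth_apply_succAbove]
      rw [zero_add]; exact t.2.2⟩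
  continuous_toFun := by
    apply Continuous.subtype_mk
    exact continuous_const.finInsertNth j continuous_subtype_val

/-- The `j`-th vertex of the standard `m`-simplex. -/
def vert (m : ℕ) (j : Fin (m+1)) : TSimp m :=
  ⟨fun i => if i = j then 1 else 0, by
    refine ⟨fun k => ?_, ?_⟩
    · dsimp only; split <;> norm_num
    · classical
      simp [Finset.sum_ite_eq']⟩


/-! ## Generic homology of constraint systems on chain groups -/

section generic

variable {C : ℕ → Type w} [∀ m, AddCommGroup (C m)]
variable {D : ℕ → Type v} [∀ m, AddCommGroup (D m)]

/-- Relative cycles: chains of `A` whose boundary lies in `B`. -/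
def relCycles (d : ∀ m, C m →+ C (m-1)) (A B : ∀ m, AddSubgroup (C m)) (m : ℕ) :
    AddSubgroup (C m) :=
  A m ⊓ (B (m-1)).comap (d m)

/-- Relative boundaries: boundaries of chains of `A`, together with chains of `B`. -/
def relBnds (d : ∀ m, C m →+ C (m-1)) (A B : ∀ m, AddSubgroup (C m)) (m : ℕ) :
    AddSubgroup (C m) :=
  (A (m+1)).map (d (m+1)) ⊔ B m

/-- Relative homology of the pair of constraint systems `(A, B)`. -/
abbrev relHomology (d : ∀ m, C m →+ C (m-1)) (A B : ∀ m, AddSubgroup (C m)) (m : ℕ) :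
    Type w :=
  relCycles d A B m ⧸
    ((relBnds d A B m ⊓ relCycles d A B m).addSubgroupOf (relCycles d A B m))

/-- The homology class of a relative cycle. -/
def hcl (d : ∀ m, C m →+ C (m-1)) (A B : ∀ m, AddSubgroup (C m)) {m : ℕ}
    (ξ : C m) (h : ξ ∈ relCycles d A B m) : relHomology d A B m :=
  QuotientAddGroup.mk (⟨ξ, h⟩ : relCycles d A B m)

/-- `f` induces an isomorphism in homology, compatibly with classes of cycles. -/
def InducesIso (d : ∀ m, C m →+ C (m-1)) (A B : ∀ m, AddSubgroup (C m))
    (d' : ∀ m, D m →+ D (m-1)) (A' B' : ∀ m, AddSubgroup (D m)) (m : ℕ)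
    (f : C m →+ D m) : Prop :=
  ∃ φ : relHomology d A B m ≃+ relHomology d' A' B' m,
    ∀ (ξ : C m) (h : ξ ∈ relCycles d A B m) (h' : f ξ ∈ relCycles d' A' B' m),
      φ (hcl d A B ξ h) = hcl d' A' B' (f ξ) h'

/-- The homomorphism induced in homology by an inclusion of constraint systems. -/
def inclInduced (d : ∀ m, C m →+ C (m-1)) (A B A' B' : ∀ m, AddSubgroup (C m))
    (hA : ∀ m, A m ≤ A' m) (hB : ∀ m, B m ≤ B' m) (m : ℕ) :
    relHomology d A B m →+ relHomology d A' B' m := by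
  have hZ : relCycles d A B m ≤ relCycles d A' B' m := by
    rintro ξ ⟨h1, h2⟩
    exact ⟨hA _ h1, hB _ h2⟩
  refine QuotientAddGroup.map _ _ (AddSubgroup.inclusion hZ) ?_
  intro x hx
  rw [AddSubgroup.mem_addSubgroupOf] at hx
  rw [AddSubgroup.mem_comap, AddSubgroup.mem_addSubgroupOf, AddSubgroup.coe_inclusion]
  refine ⟨?_, hZ x.2⟩
  exact (sup_le_sup (AddSubgroup.map_mono (hA _)) (hB _) : _ ≤ relBnds d A' B' m) hx.1

end generic

/-! ## Filtered simplices and their chain complexes -/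

/-- A simplex of `X` together with a block assignment of its vertices:
a candidate filtered simplex, the blocks recording the join decomposition
`Δ = Δ_0 ∗ ⋯ ∗ Δ_n`. -/
structure PreSimplex (X : Type u) [TopologicalSpace X] (m : ℕ) : Type u where
  map : C(TSimp m, X)
  block : Fin (m+1) → ℤ

variable {X : Type u} {Y : Type v} [TopologicalSpace X] [TopologicalSpace Y]

/-- The `j`-th face of a pre-simplex. -/
def PreSimplex.face {m : ℕ} (σ : PreSimplex X (m+1)) (j : Fin (m+2)) : PreSimplex X m :=
  ⟨σ.map.comp (faceMap m j), σ.block ∘ j.succAbove⟩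

/-- A generator system for chain complexes: generators and face operators. -/
structure SimpSystem : Type (u+1) where
  Gen : ℕ → Type u
  face : ∀ m : ℕ, Fin (m+2) → Gen (m+1) → Gen m

/-- The system of pre-filtered simplices of `X`. -/
abbrev filtSys (X : Type u) [TopologicalSpace X] : SimpSystem.{u} where
  Gen m := PreSimplex X m
  face _ j σ := σ.face j

/-- The system of all singular simplices of `X`. -/
abbrev singSys (X : Type u) [TopologicalSpace X] : SimpSystem.{u} where
  Gen m := C(TSimp m, X)
  face m j σ := σ.comp (faceMap m j)

namespace SimpSystem

variable (S : SimpSystem.{u}) (G : Type w) [AddCommGroup G]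

/-- Chains on the generators of `S`, with coefficients in `G`. -/
abbrev Chains (m : ℕ) : Type _ := S.Gen m →₀ G

/-- The boundary operator. -/
def bdry (m : ℕ) : S.Chains G (m+1) →+ S.Chains G m :=
  Finsupp.liftAddHom fun σ =>
    ∑ j : Fin (m+2), (-1 : ℤ) ^ (j : ℕ) • Finsupp.singleAddHom (S.face m j σ)

/-- The boundary operator, vanishing in degree `0`. -/
def bdryFrom : ∀ m : ℕ, S.Chains G m →+ S.Chains G (m-1)
  | 0 => 0
  | (m+1) => S.bdry G m

/-- The subgroup of chains all of whose simplices satisfy `P`. -/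
def suppIn {m : ℕ} (P : S.Gen m → Prop) : AddSubgroup (S.Chains G m) where
  carrier := {ξ | ∀ σ ∈ ξ.support, P σ}
  zero_mem' := by intro σ h; simp at h
  add_mem' := by
    classical
    intro a b ha hb σ h
    rcases Finset.mem_union.mp (Finsupp.support_add h) with h' | h'
    exacts [ha σ h', hb σ h']
  neg_mem' := by
    intro a ha σ h
    rw [Finsupp.support_neg] at h
    exact ha σ h

end SimpSystem

/-! ## Admissibility -/

/-- A singular simplex is `p`-admissible when, for every stratum `S`, the preimage
of `S` is contained in the skeleton of dimension `dim Δ - codim S + p S`. -/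
def MapAdmissible (F : FilteredSpace X) (p : Set X → ℤ) {m : ℕ} (τ : C(TSimp m, X)) : Prop :=
  ∀ S : Set X, F.IsStratum S → ∀ t : TSimp m, τ t ∈ S →
    (suppCard t : ℤ) ≤ (m : ℤ) - F.codim S + p S + 1

/-- A pre-simplex is a filtered simplex when its blocks are monotone and detect the
filtration: `σ⁻¹(X_i) = Δ_0 ∗ ⋯ ∗ Δ_i`. -/
def PreSimplex.IsFiltered (F : FilteredSpace X) {m : ℕ} (σ : PreSimplex X m) : Prop :=
  Monotone σ.block ∧
    ∀ i : ℤ, σ.map ⁻¹' (F.filt i) =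
      {t : TSimp m | ∀ j, (t : Fin (m+1) → ℝ) j ≠ 0 → σ.block j ≤ i}

/-- `p`-admissibility of a pre-simplex. -/
def PreSimplex.Admissible (F : FilteredSpace X) (p : Set X → ℤ) {m : ℕ}
    (σ : PreSimplex X m) : Prop :=
  MapAdmissible F p σ.map

/-- The allowable simplices of the `p`-intersection complex with support in the
region `W` : filtered, `p`-admissible, with image contained in `W`. -/
def Allowable (F : FilteredSpace X) (p : Set X → ℤ) (W : Set X) {m : ℕ}
    (σ : PreSimplex X m) : Prop :=
  σ.IsFiltered F ∧ σ.Admissible F p ∧ Set.range σ.map ⊆ W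

/-- The complex `C_*^{p̄}` of `p`-intersection chains (of filtered simplices),
with support in the region `W` : chains `ξ` such that every simplex of `ξ` and of
`∂ξ` is `p`-admissible (and carried by `W`). -/
def iChains (F : FilteredSpace X) (p : Set X → ℤ) (G : Type w) [AddCommGroup G]
    (W : Set X) (m : ℕ) : AddSubgroup ((filtSys X).Chains G m) :=
  (filtSys X).suppIn G (fun σ : PreSimplex X m => Allowable F p W σ) ⊓
    ((filtSys X).suppIn G (fun σ : PreSimplex X (m-1) => Allowable F p W σ)).comap
      ((filtSys X).bdryFrom G m)

/-- Intersection homology `H_*^{p̄}` of the part of `X` carried by the region `W`,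
relative to the region `W'` (absolute case: `W = univ`, `W' = ∅`). -/
abbrev iH (F : FilteredSpace X) (p : Set X → ℤ) (G : Type w) [AddCommGroup G]
    (W W' : Set X) (m : ℕ) : Type _ :=
  relHomology ((filtSys X).bdryFrom G) (fun k => iChains F p G W k)
    (fun k => iChains F p G W' k) m

/-- MacPherson's complex `I^{p̄}C_*` of singular intersection chains: all singular
simplices, `p̄`-admissibility as above. -/
def mChains (F : FilteredSpace X) (p : Set X → ℤ) (G : Type w) [AddCommGroup G]
    (m : ℕ) : AddSubgroup ((singSys X).Chains G m) :=
  (singSys X).suppIn G (fun τ : C(TSimp m, X) => MapAdmissible F p τ) ⊓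
    ((singSys X).suppIn G (fun τ : C(TSimp (m-1), X) => MapAdmissible F p τ)).comap
      ((singSys X).bdryFrom G m)

/-- The subcomplex of singular chains carried by `W`. -/
def sChains (X : Type u) [TopologicalSpace X] (G : Type w) [AddCommGroup G]
    (W : Set X) (m : ℕ) : AddSubgroup ((singSys X).Chains G m) :=
  (singSys X).suppIn G (fun τ : C(TSimp m, X) => Set.range τ ⊆ W)

/-- Singular homology of the pair of regions `(W, W')` of `X`. -/
abbrev sH (X : Type u) [TopologicalSpace X] (G : Type w) [AddCommGroup G]
    (W W' : Set X) (m : ℕ) : Type _ :=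
  relHomology ((singSys X).bdryFrom G) (fun k => sChains X G W k)
    (fun k => sChains X G W' k) m

/-! ## Pushforwards -/

/-- The canonical block assignment of a singular simplex of a filtered space:
the vertex `j` is assigned the lowest filtration level containing its image. -/
def canonicalBlock (F : FilteredSpace Y) {m : ℕ} (τ : C(TSimp m, Y)) : Fin (m+1) → ℤ :=
  fun j => sInf {i : ℤ | τ (vert m j) ∈ F.filt i}

/-- Pushforward of a pre-simplex along a continuous map, with the canonical blocks
of the target filtration. -/
def pushSimp (F' : FilteredSpace Y) (g : C(X, Y)) {m : ℕ} (σ : PreSimplex X m) :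
    PreSimplex Y m :=
  ⟨g.comp σ.map, canonicalBlock F' (g.comp σ.map)⟩

/-- Pushforward of chains along a continuous map (`σ ↦ f ∘ σ`). -/
def pushChain (F' : FilteredSpace Y) (g : C(X, Y)) (G : Type w) [AddCommGroup G]
    (m : ℕ) : (filtSys X).Chains G m →+ (filtSys Y).Chains G m :=
  Finsupp.mapDomain.addMonoidHom (pushSimp F' g)

/-- Forget the blocks: from filtered chains to singular chains. -/
def forgetChain (X : Type u) [TopologicalSpace X] (G : Type w) [AddCommGroup G]
    (m : ℕ) : (filtSys X).Chains G m →+ (singSys X).Chains G m :=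
  Finsupp.mapDomain.addMonoidHom (fun σ : PreSimplex X m => σ.map)

/-- Equip singular chains with canonical blocks. -/
def withBlocks (F : FilteredSpace X) (G : Type w) [AddCommGroup G] (m : ℕ) :
    (singSys X).Chains G m →+ (filtSys X).Chains G m :=
  Finsupp.mapDomain.addMonoidHom
    (fun τ : C(TSimp m, X) => (⟨τ, canonicalBlock F τ⟩ : PreSimplex X m))

/-! ## Tame (modered) intersection chains -/

/-- A pre-simplex is regular when its last join factor `Δ_n` is nonempty,
i.e. some vertex has block equal to the formal dimension of the space. -/
def PreSimplex.RegularS (F : FilteredSpace X) {m : ℕ} (σ : PreSimplex X m) : Prop :=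
  ∃ j, σ.block j = (F.dim : ℤ)

/-- The subgroup of chains carried by the singular set (all simplices singular). -/
def tSub (F : FilteredSpace X) (G : Type w) [AddCommGroup G] (m : ℕ) :
    AddSubgroup ((filtSys X).Chains G m) :=
  (filtSys X).suppIn G (fun σ : PreSimplex X m => ¬ σ.RegularS F)

/-- The quotient complex `𝔠_* = C_*(X)/C_*(Σ)`. -/
abbrev tChains (F : FilteredSpace X) (G : Type w) [AddCommGroup G] (m : ℕ) : Type _ :=
  (filtSys X).Chains G m ⧸ tSub F G m

/-- The projection onto the tame quotient. -/
def tProj (F : FilteredSpace X) (G : Type w) [AddCommGroup G] (m : ℕ) :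
    (filtSys X).Chains G m →+ tChains F G m :=
  QuotientAddGroup.mk' (tSub F G m)

open Classical in
/-- The regular part `∂_reg` of the boundary: only regular faces are kept. -/
def bdryReg (F : FilteredSpace X) (G : Type w) [AddCommGroup G] (m : ℕ) :
    (filtSys X).Chains G (m+1) →+ (filtSys X).Chains G m :=
  Finsupp.liftAddHom fun σ =>
    ∑ j : Fin (m+2), (-1 : ℤ) ^ (j : ℕ) •
      (if (σ.face j).RegularS F then Finsupp.singleAddHom (σ.face j) else 0)

/-- `∂_reg`, vanishing in degree 0. -/
def bdryRegFrom (F : FilteredSpace X) (G : Type w) [AddCommGroup G] :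
    ∀ m : ℕ, (filtSys X).Chains G m →+ (filtSys X).Chains G (m-1)
  | 0 => 0
  | (m+1) => bdryReg F G m

lemma bdryRegFrom_eq_zero (F : FilteredSpace X) (G : Type w) [AddCommGroup G] (m : ℕ)
    (ξ : (filtSys X).Chains G m) (hξ : ξ ∈ tSub F G m) :
    bdryRegFrom F G m ξ = 0 := by
  classical
  cases m with
  | zero => rfl
  | succ m =>
    show bdryReg F G m ξ = 0
    rw [bdryReg, Finsupp.liftAddHom_apply, Finsupp.sum]
    apply Finset.sum_eq_zero
    intro σ hσ
    have hns : ¬ σ.RegularS F := hξ σ hσ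
    have hface : ∀ j : Fin (m+2), ¬ (σ.face j).RegularS F := by
      intro j hj
      obtain ⟨k, hk⟩ := hj
      exact hns ⟨j.succAbove k, hk⟩
    have hzero : (∑ j : Fin (m+2), (-1 : ℤ) ^ (j : ℕ) •
        (if (σ.face j).RegularS F then Finsupp.singleAddHom (σ.face j) else 0) :
        G →+ (filtSys X).Chains G m) = 0 := by
      apply Finset.sum_eq_zero
      intro j _
      rw [if_neg (hface j), smul_zero]
    rw [hzero]
    rfl

/-- The differential `𝔡` induced by `∂_reg` on the tame quotient. -/
def tBdryFrom (F : FilteredSpace X) (G : Type w) [AddCommGroup G] (m : ℕ) :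
    tChains F G m →+ tChains F G (m-1) :=
  QuotientAddGroup.map _ _ (bdryRegFrom F G m)
    (by
      intro ξ hξ
      rw [AddSubgroup.mem_comap, bdryRegFrom_eq_zero F G m ξ hξ]
      exact zero_mem _)

/-- The classes of `p`-admissible chains in the tame quotient. -/
def tAdm (F : FilteredSpace X) (p : Set X → ℤ) (G : Type w) [AddCommGroup G] (m : ℕ) :
    AddSubgroup (tChains F G m) :=
  ((filtSys X).suppIn G
      (fun σ : PreSimplex X m => σ.IsFiltered F ∧ σ.Admissible F p)).map (tProj F G m)

/-- The tame `p`-intersection complex `𝔠_*^{p̄}` : classes of admissible chains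
whose `𝔡`-boundary is again (the class of) an admissible chain. -/
def tIC (F : FilteredSpace X) (p : Set X → ℤ) (G : Type w) [AddCommGroup G] (m : ℕ) :
    AddSubgroup (tChains F G m) :=
  tAdm F p G m ⊓ (tAdm F p G (m-1)).comap (tBdryFrom F G m)

/-- Tame intersection homology `𝔥_*^{p̄}(X; G)`. -/
abbrev tH (F : FilteredSpace X) (p : Set X → ℤ) (G : Type w) [AddCommGroup G] (m : ℕ) :
    Type _ :=
  relHomology (tBdryFrom F G) (fun k => tIC F p G k) (fun _ => ⊥) m

/-! ## Products with a factor -/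

/-- The product filtration on `M × X` : `(M × X)_i = M × X_i`. -/
def FilteredSpace.prodLeft (M : Type v) [TopologicalSpace M] [Nonempty M]
    (F : FilteredSpace X) : FilteredSpace (M × X) where
  dim := F.dim
  filt i := univ ×ˢ F.filt i
  filt_neg i h := by rw [F.filt_neg i h, Set.prod_empty]
  filt_mono := fun i j h => Set.prod_mono (le_refl _) (F.filt_mono h)
  filt_closed i := isClosed_univ.prod (F.filt_closed i)
  filt_top i h := by rw [F.filt_top i h, Set.univ_prod_univ]
  reg_nonempty := by
    obtain ⟨x, hx1, hx2⟩ := F.reg_nonempty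
    exact ⟨(Classical.arbitrary M, x), ⟨trivial, hx1⟩, fun h => hx2 h.2⟩

/-- The product filtration on `X × M` : `(X × M)_i = X_i × M`. -/
def FilteredSpace.prodRight (M : Type v) [TopologicalSpace M] [Nonempty M]
    (F : FilteredSpace X) : FilteredSpace (X × M) where
  dim := F.dim
  filt i := F.filt i ×ˢ univ
  filt_neg i h := by rw [F.filt_neg i h, Set.empty_prod]
  filt_mono := fun i j h => Set.prod_mono (F.filt_mono h) (le_refl _)
  filt_closed i := (F.filt_closed i).prod isClosed_univ
  filt_top i h := by rw [F.filt_top i h, Set.univ_prod_univ]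
  reg_nonempty := by
    obtain ⟨x, hx1, hx2⟩ := F.reg_nonempty
    exact ⟨(x, Classical.arbitrary M), ⟨hx1, trivial⟩, fun h => hx2 h.1⟩

/-- The perversity induced on `M × X` by a perversity on `X`
(a stratum `M × S` is sent to the value on `S`). -/
def pervProdLeft (p : Set X → ℤ) : Set (M' × X) → ℤ := fun T => p (Prod.snd '' T)

/-- The perversity induced on `X × M` by a perversity on `X`. -/
def pervProdRight (p : Set X → ℤ) : Set (X × M') → ℤ := fun T => p (Prod.fst '' T)

/-! ## The open cone -/

/-- The relation collapsing `L × {0}` in `L × [0,1)`. -/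
def coneSetoid (L : Type u) [TopologicalSpace L] :
    Setoid (L × {t : ℝ // 0 ≤ t ∧ t < 1}) where
  r a b := a = b ∨ (a.2.1 = 0 ∧ b.2.1 = 0)
  iseqv := by
    refine ⟨fun a => Or.inl rfl, ?_, ?_⟩
    · rintro a b (rfl | h)
      exacts [Or.inl rfl, Or.inr ⟨h.2, h.1⟩]
    · rintro a b c (rfl | h) (rfl | h')
      exacts [Or.inl rfl, Or.inr h', Or.inr h, Or.inr ⟨h.1, h'.2⟩]

/-- The open cone `c̊L = L × [0,1) / (L × {0})`. -/
abbrev OpenCone (L : Type u) [TopologicalSpace L] : Type u := Quotient (coneSetoid L)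

/-- The point `[x, t]` of the open cone. -/
def conePt {L : Type u} [TopologicalSpace L] (x : L) (t : {t : ℝ // 0 ≤ t ∧ t < 1}) :
    OpenCone L :=
  Quotient.mk (coneSetoid L) (x, t)

/-- The parameter `0` of the cone. -/
def czero : {t : ℝ // 0 ≤ t ∧ t < 1} := ⟨0, le_refl 0, zero_lt_one⟩

/-- The vertex `𝓌` of the open cone on a (nonempty) filtered space. -/
def coneVertexOf {L : Type u} [TopologicalSpace L] (FL : FilteredSpace L) : OpenCone L :=
  conePt FL.reg_nonempty.choose czero

/-- The cone `c̊A ⊆ c̊L` on a subset `A ⊆ L` (it contains the vertex; `c̊∅ = {𝓌}`). -/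
def coneSet {L : Type u} [TopologicalSpace L] (A : Set L) : Set (OpenCone L) :=
  {z | ∃ x t, z = conePt x t ∧ (t.1 = 0 ∨ x ∈ A)}

lemma coneSet_mono {L : Type u} [TopologicalSpace L] {A B : Set L} (h : A ⊆ B) :
    coneSet A ⊆ coneSet B := by
  rintro z ⟨x, t, rfl, h0 | hA⟩
  exacts [⟨x, t, rfl, Or.inl h0⟩, ⟨x, t, rfl, Or.inr (h hA)⟩]

lemma preimage_coneSet {L : Type u} [TopologicalSpace L] (A : Set L) :
    (Quotient.mk (coneSetoid L)) ⁻¹' (coneSet A) =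
      {a : L × {t : ℝ // 0 ≤ t ∧ t < 1} | a.2.1 = 0 ∨ a.1 ∈ A} := by
  ext ⟨x, t⟩
  constructor
  · rintro ⟨x', t', he, ht'⟩
    have hrel := Quotient.exact he
    rcases hrel with h | h
    · cases h
      exact ht'
    · exact Or.inl h.1
  · intro h
    exact ⟨x, t, rfl, h⟩

/-- The conical filtration on the open cone : `(c̊L)_i = c̊(L_{i-1})`. -/
def coneFiltered {L : Type u} [TopologicalSpace L] (FL : FilteredSpace L) :
    FilteredSpace (OpenCone L) where
  dim := FL.dim + 1
  filt i := if i < 0 then ∅ else coneSet (FL.filt (i-1))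
  filt_neg i h := by rw [if_pos h]
  filt_mono := by
    intro i j hij
    dsimp only
    by_cases hi : i < 0
    · rw [if_pos hi]; exact empty_subset _
    · rw [if_neg hi, if_neg (by omega)]
      exact coneSet_mono (FL.filt_mono (by omega))
  filt_closed i := by
    by_cases hi : i < 0
    · rw [if_pos hi]; exact isClosed_empty
    · rw [if_neg hi]
      rw [← isQuotientMap_quotient_mk'.isClosed_preimage]
      show IsClosed ((Quotient.mk (coneSetoid L)) ⁻¹' (coneSet (FL.filt (i-1))))
      rw [preimage_coneSet]
      have he : {a : L × {t : ℝ // 0 ≤ t ∧ t < 1} | a.2.1 = 0 ∨ a.1 ∈ FL.filt (i-1)} =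
          (univ ×ˢ {t : {t : ℝ // 0 ≤ t ∧ t < 1} | t.1 = 0}) ∪ (FL.filt (i-1) ×ˢ univ) := by
        ext ⟨x, t⟩
        simp only [Set.mem_setOf_eq, Set.mem_union, Set.mem_prod, Set.mem_univ, true_and,
          and_true]
      rw [he]
      refine IsClosed.union (isClosed_univ.prod ?_) ((FL.filt_closed _).prod isClosed_univ)
      have he2 : {t : {t : ℝ // 0 ≤ t ∧ t < 1} | t.1 = 0} =
          (Subtype.val : {t : ℝ // 0 ≤ t ∧ t < 1} → ℝ) ⁻¹' {0} := by rfl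
      rw [he2]
      exact isClosed_singleton.preimage continuous_subtype_val
  filt_top i h := by
    have h' : (0 : ℤ) ≤ i := by
      refine le_trans ?_ h
      positivity
    rw [if_neg (by omega)]
    rw [FL.filt_top (i-1) (by push_cast at h ⊢; omega)]
    apply Set.eq_univ_of_forall
    intro z
    obtain ⟨⟨x, t⟩, rfl⟩ := Quotient.exists_rep z
    exact ⟨x, t, rfl, Or.inr trivial⟩
  reg_nonempty := by
    obtain ⟨x, hx1, hx2⟩ := FL.reg_nonempty
    have hd1 : ((FL.dim + 1 : ℕ) : ℤ) - 1 = (FL.dim : ℤ) := by push_cast; ring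
    refine ⟨conePt x ⟨1/2, by norm_num, by norm_num⟩, ?_, ?_⟩
    · rw [if_neg (by push_cast; omega)]
      refine ⟨x, _, rfl, Or.inr ?_⟩
      rw [hd1]
      exact hx1
    · rw [if_neg (by push_cast; omega)]
      rintro ⟨x', t', he, hp⟩
      have hrel := Quotient.exact he
      rcases hrel with hq | hq
      · rcases hp with h0 | hA
        · rw [← congrArg (fun a => (Prod.snd a).1) hq] at h0
          norm_num at h0
        · apply hx2
          have hx' : x' = x := (congrArg Prod.fst hq).symm
          rw [hx'] at hA
          have hd2 : ((FL.dim + 1 : ℕ) : ℤ) - 1 - 1 = (FL.dim : ℤ) - 1 := by push_cast; ring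
          rw [hd2] at hA
          exact hA
      · norm_num at hq

/-- The perversity induced on `L` by a perversity on the cone `c̊L` :
`p̄(S) = p̄(S × ]0,1[)`. -/
def pervConeSlice {L : Type u} [TopologicalSpace L] (p : Set (OpenCone L) → ℤ) :
    Set L → ℤ :=
  fun S => p {z | ∃ x t, z = conePt x t ∧ x ∈ S ∧ t.1 ≠ 0}

/-! ## The intrinsic filtration -/

/-- Two points of a space are equivalent when some pointed neighbourhoods are
homeomorphic. -/
def PtEquiv (X : Type u) [TopologicalSpace X] (x y : X) : Prop :=
  ∃ (U V : Set X) (hU : IsOpen U) (hV : IsOpen V) (hx : x ∈ U) (hy : y ∈ V)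
    (h : U ≃ₜ V), h ⟨x, hx⟩ = ⟨y, hy⟩

lemma PtEquiv.refl (X : Type u) [TopologicalSpace X] (x : X) : PtEquiv X x x :=
  ⟨univ, univ, isOpen_univ, isOpen_univ, trivial, trivial, Homeomorph.refl _, rfl⟩

/-- The filtration of the intrinsic CS-set `X^*`: `X^*_i` is the union of the
equivalence classes contained in `X_i` (equivalently, formed of strata of
dimension at most `i`). -/
def intrinsicFilt {X : Type u} [TopologicalSpace X] (F : FilteredSpace X) (i : ℤ) :
    Set X :=
  {x | ∀ y, PtEquiv X x y → y ∈ F.filt i}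

/-- The intrinsic filtered space `X^*` associated with a filtered space. -/
def intrinsic {X : Type u} [TopologicalSpace X] (F : FilteredSpace X) :
    FilteredSpace X where
  dim := F.dim
  filt := intrinsicFilt F
  filt_neg i h := by
    rw [Set.eq_empty_iff_forall_notMem]
    intro x hx
    have := hx x (PtEquiv.refl X x)
    rw [F.filt_neg i h] at this
    exact this
  filt_mono := fun i j hij x hx y hy => F.filt_mono hij (hx y hy)
  filt_closed i := by
    rw [← isOpen_compl_iff, isOpen_iff_forall_mem_open]
    intro x hx
    rw [Set.mem_compl_iff, intrinsicFilt, Set.mem_setOf_eq, not_forall] at hx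
    obtain ⟨y, hy⟩ := hx
    rw [_root_.not_imp] at hy
    obtain ⟨⟨U, V, hU, hV, hxU, hyV, h, hhx⟩, hyF⟩ := hy
    refine ⟨Subtype.val '' (⇑h ⁻¹' (Subtype.val ⁻¹' (F.filt i)ᶜ)), ?_, ?_, ?_⟩
    · rintro _ ⟨u, hu, rfl⟩
      intro hcon
      exact hu (hcon (h u).1 ⟨U, V, hU, hV, u.2, (h u).2, h, rfl⟩)
    · exact hU.isOpenMap_subtype_val _
        ((h.continuous.isOpen_preimage _) (continuous_subtype_val.isOpen_preimage _
          (F.filt_closed i).isOpen_compl))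
    · refine ⟨⟨x, hxU⟩, ?_, rfl⟩
      show (h ⟨x, hxU⟩ : X) ∉ F.filt i
      rw [hhx]
      exact hyF
  filt_top i h := by
    apply Set.eq_univ_of_forall
    intro x y hy
    rw [F.filt_top i h]
    trivial
  reg_nonempty := by
    obtain ⟨x, hx1, hx2⟩ := F.reg_nonempty
    refine ⟨x, ?_, ?_⟩
    · intro y hy
      rw [F.filt_top _ (le_refl _)]
      trivial
    · intro hcon
      exact hx2 (hcon x (PtEquiv.refl X x))

/-- A stratum `S` of `X` is a source of a stratum `T` of `X^*` when `ν(S) ⊆ T`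
and `dim S = dim T`. -/
def IsSource {X : Type u} [TopologicalSpace X] (F : FilteredSpace X) (S T : Set X) :
    Prop :=
  F.IsStratum S ∧ (intrinsic F).IsStratum T ∧ S ⊆ T ∧
    F.stratumDim S = (intrinsic F).stratumDim T

/-- Equivalence of strata: some point of one is equivalent to some point of the
other. -/
def StrataEquiv (X : Type u) [TopologicalSpace X] (S S' : Set X) : Prop :=
  ∃ x ∈ S, ∃ y ∈ S', PtEquiv X x y

/-- `K`-perversity. -/
def IsKPerversity {X : Type u} [TopologicalSpace X] (F : FilteredSpace X)
    (p : Set X → ℤ) : Prop :=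
  F.IsPerversity p ∧
  (∀ S S' T, IsSource F S T → IsSource F S' T → p S = p S') ∧
  (∀ S R, F.IsStratum S → F.IsRegularStratum R → StrataEquiv X S R → 0 ≤ p S) ∧
  (∀ S S' T, F.IsStratum S → IsSource F S' T → F.IsSingularStratum S' →
    S ⊆ closure S' → StrataEquiv X S S' →
      p S ≤ p S' ∧ F.dualPerv p S' ≤ F.dualPerv p S)

open Classical in
/-- The perversity `ν_* p̄` induced on `X^*` by a perversity on `X` :
its value on a stratum `T` of `X^*` is the value of `p̄` on any source of `T`. -/
def pushPerv {X : Type u} [TopologicalSpace X] (F : FilteredSpace X) (p : Set X → ℤ) :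
    Set X → ℤ :=
  fun T => if h : ∃ S, IsSource F S T then p h.choose else 0

open Classical in
/-- The pullback perversity `f^* q̄` of a perversity along a stratified map:
`(f^* q̄)(S) = q̄(S^f)`. -/
def pullPerv {X : Type u} {Y : Type v} [TopologicalSpace X] [TopologicalSpace Y]
    (F : FilteredSpace X) (F' : FilteredSpace Y) (f : X → Y) (q : Set Y → ℤ) :
    Set X → ℤ :=
  fun S => if h : ∃ T, F'.IsStratum T ∧ f '' S ⊆ T then q h.choose else 0

/-- The intrinsic aggregation `ν : X → X^*` (the identity map), as a pushforward of
filtered chains: blocks are recomputed with respect to the intrinsic filtration. -/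
def nuChain {X : Type u} [TopologicalSpace X] (F : FilteredSpace X) (G : Type w)
    [AddCommGroup G] (m : ℕ) :
    (filtSys X).Chains G m →+ (filtSys X).Chains G m :=
  pushChain (intrinsic F) (ContinuousMap.id X) G m

/-! ## CS sets -/

/-- A CS-set: each `X_i ∖ X_{i-1}` is a topological `i`-manifold (possibly empty)
and points of `X_i ∖ X_{i-1}`, `i ≠ n`, have conical charts `U × c̊L ≅ V` with `L`
a compact (Hausdorff) filtered space of formal dimension `n - i - 1`. -/
def IsCSSet {X : Type u} [TopologicalSpace X] (F : FilteredSpace X) : Prop :=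
  (∀ i : ℕ, ∀ x, ∀ hx : x ∈ F.filt i \ F.filt ((i : ℤ) - 1),
      ∃ V : Set ↥(F.filt i \ F.filt ((i : ℤ) - 1)), IsOpen V ∧ ⟨x, hx⟩ ∈ V ∧
        Nonempty (↥V ≃ₜ (Fin i → ℝ))) ∧
  (∀ i : ℕ, i < F.dim → ∀ x ∈ F.filt i \ F.filt ((i : ℤ) - 1),
    ∃ V : Set X, IsOpen V ∧ x ∈ V ∧
    ∃ U : Set X, x ∈ U ∧ U ⊆ F.filt i \ F.filt ((i : ℤ) - 1) ∧
      IsOpen (Subtype.val ⁻¹' U : Set ↥(F.filt i \ F.filt ((i : ℤ) - 1))) ∧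
    ∃ (L : Type u) (_ : TopologicalSpace L) (_ : T2Space L) (_ : CompactSpace L)
      (FL : FilteredSpace L), (FL.dim : ℤ) = (F.dim : ℤ) - i - 1 ∧
    ∃ φ : (↥U × OpenCone L) ≃ₜ ↥V,
      (∀ u : ↥U, ((φ (u, coneVertexOf FL) : ↥V) : X) = (u : X)) ∧
      (∀ j : ℤ, 0 ≤ j → j ≤ (F.dim : ℤ) - i - 1 →
        Subtype.val '' (⇑φ '' (univ ×ˢ coneSet (FL.filt j))) = V ∩ F.filt (i + j + 1)))

/-- A normal CS-set: one admitting conical charts with connected links. -/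
def IsNormalCSSet {X : Type u} [TopologicalSpace X] (F : FilteredSpace X) : Prop :=
  (∀ i : ℕ, ∀ x, ∀ hx : x ∈ F.filt i \ F.filt ((i : ℤ) - 1),
      ∃ V : Set ↥(F.filt i \ F.filt ((i : ℤ) - 1)), IsOpen V ∧ ⟨x, hx⟩ ∈ V ∧
        Nonempty (↥V ≃ₜ (Fin i → ℝ))) ∧
  (∀ i : ℕ, i < F.dim → ∀ x ∈ F.filt i \ F.filt ((i : ℤ) - 1),
    ∃ V : Set X, IsOpen V ∧ x ∈ V ∧
    ∃ U : Set X, x ∈ U ∧ U ⊆ F.filt i \ F.filt ((i : ℤ) - 1) ∧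
      IsOpen (Subtype.val ⁻¹' U : Set ↥(F.filt i \ F.filt ((i : ℤ) - 1))) ∧
    ∃ (L : Type u) (_ : TopologicalSpace L) (_ : T2Space L) (_ : CompactSpace L)
      (_ : ConnectedSpace L) (FL : FilteredSpace L),
      (FL.dim : ℤ) = (F.dim : ℤ) - i - 1 ∧
    ∃ φ : (↥U × OpenCone L) ≃ₜ ↥V,
      (∀ u : ↥U, ((φ (u, coneVertexOf FL) : ↥V) : X) = (u : X)) ∧
      (∀ j : ℤ, 0 ≤ j → j ≤ (F.dim : ℤ) - i - 1 →
        Subtype.val '' (⇑φ '' (univ ×ˢ coneSet (FL.filt j))) = V ∩ F.filt (i + j + 1)))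

/-! ## Miscellaneous helpers -/

lemma SimpSystem.suppIn_mono (S : SimpSystem.{u}) (G : Type w) [AddCommGroup G] {m : ℕ}
    {P Q : S.Gen m → Prop} (h : ∀ σ, P σ → Q σ) : S.suppIn G P ≤ S.suppIn G Q :=
  fun ξ hξ σ hσ => h σ (hξ σ hσ)

lemma iChains_mono (F : FilteredSpace X) (p : Set X → ℤ) (G : Type w) [AddCommGroup G]
    {W W' : Set X} (h : W ⊆ W') (m : ℕ) :
    iChains F p G W m ≤ iChains F p G W' m := by
  apply inf_le_inf
  · exact (filtSys X).suppIn_mono G (fun σ hσ => ⟨hσ.1, hσ.2.1, hσ.2.2.trans h⟩)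
  · exact AddSubgroup.comap_mono
      ((filtSys X).suppIn_mono G (fun σ hσ => ⟨hσ.1, hσ.2.1, hσ.2.2.trans h⟩))

/-- The inclusion `x ↦ [x, t]` of `L` into the open cone. -/
def coneIncl {L : Type u} [TopologicalSpace L] (t : ℝ) (h0 : 0 ≤ t) (h1 : t < 1) :
    C(L, OpenCone L) where
  toFun x := conePt x ⟨t, h0, h1⟩
  continuous_toFun := by
    apply Continuous.comp
    · exact continuous_quotient_mk'
    · exact continuous_id.prodMk continuous_const

/-- The unit sphere `S^ℓ ⊆ ℝ^{ℓ+1}`. -/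
abbrev Sph (l : ℕ) : Set (EuclideanSpace ℝ (Fin (l+1))) := Metric.sphere 0 1

instance (l : ℕ) : Nonempty (Sph l) :=
  (NormedSpace.sphere_nonempty.mpr zero_le_one).to_subtype

/-- `p̄`-homogeneity: every singular stratum equivalent to a regular stratum has
`p̄(S) ≤ t̄(S)`. -/
def PHomogeneous {X : Type u} [TopologicalSpace X] (F : FilteredSpace X)
    (p : Set X → ℤ) : Prop :=
  ∀ S R, F.IsSingularStratum S → F.IsRegularStratum R → StrataEquiv X S R →
    p S ≤ F.codim S - 2

/-! ## Stratified spaces, more perversities, absolute homology -/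

/-- A stratified space: a filtered space in which the frontier condition holds for
strata: `S ∩ cl S' ≠ ∅` implies `S ⊆ cl S'`. -/
def FilteredSpace.IsStratifiedSpace {X : Type u} [TopologicalSpace X]
    (F : FilteredSpace X) : Prop :=
  ∀ S S', F.IsStratum S → F.IsStratum S' → (S ∩ closure S').Nonempty → S ⊆ closure S'

open Classical in
/-- The maximal (top) perversity `t̄` : `t̄(S) = codim S - 2` on singular strata. -/
def tPerv {X : Type u} [TopologicalSpace X] (F : FilteredSpace X) : Set X → ℤ :=
  fun S => if F.IsRegularStratum S then 0 else F.codim S - 2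

/-- Absolute `p̄`-intersection homology of the region `W` of `X`. -/
abbrev iHa {X : Type u} [TopologicalSpace X] (F : FilteredSpace X) (p : Set X → ℤ)
    (G : Type w) [AddCommGroup G] (W : Set X) (m : ℕ) : Type _ :=
  relHomology ((filtSys X).bdryFrom G) (fun k => iChains F p G W k) (fun _ => ⊥) m

/-- Absolute singular homology of the region `W` of `X`. -/
abbrev sHa (X : Type u) [TopologicalSpace X] (G : Type w) [AddCommGroup G]
    (W : Set X) (m : ℕ) : Type _ :=
  relHomology ((singSys X).bdryFrom G) (fun k => sChains X G W k) (fun _ => ⊥) m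

/-- MacPherson's singular intersection homology `I^{p̄}H_*`. -/
abbrev mH {X : Type u} [TopologicalSpace X] (F : FilteredSpace X) (p : Set X → ℤ)
    (G : Type w) [AddCommGroup G] (m : ℕ) : Type _ :=
  relHomology ((singSys X).bdryFrom G) (fun k => mChains F p G k) (fun _ => ⊥) m

/-! ## Fatal faces and the defect -/

/-- The vertex set of the smallest face `F_S` of `Δ` containing `σ⁻¹(S)`. -/
def vtx {X : Type u} [TopologicalSpace X] {m : ℕ} (σ : PreSimplex X m) (S : Set X) :
    Set (Fin (m+1)) :=
  {j | ∃ t : TSimp m, σ.map t ∈ S ∧ (t : Fin (m+1) → ℝ) j ≠ 0}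

/-- The candidates for the fatal face: proper faces `F_S` with
`dim F_S = dim Δ - codim S + p̄(S)`. -/
def fatalCands {X : Type u} [TopologicalSpace X] (F : FilteredSpace X) (p : Set X → ℤ)
    {m : ℕ} (σ : PreSimplex X m) : Set (Set (Fin (m+1))) :=
  {A | ∃ S, F.IsStratum S ∧ A = vtx σ S ∧ A ≠ univ ∧
    ((A.ncard : ℤ) = (m : ℤ) - F.codim S + p S + 1)}

/-- `A` is (the vertex set of) the `p̄`-fatal face of `σ`: the least candidate. -/
def IsFatalIdx {X : Type u} [TopologicalSpace X] (F : FilteredSpace X) (p : Set X → ℤ)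
    {m : ℕ} (σ : PreSimplex X m) (A : Set (Fin (m+1))) : Prop :=
  A ∈ fatalCands F p σ ∧ ∀ B ∈ fatalCands F p σ, A ⊆ B

/-- `S` is the `p̄`-guilty stratum of `σ` : `F_S` is the fatal face of `σ`. -/
def IsGuilty {X : Type u} [TopologicalSpace X] (F : FilteredSpace X) (p : Set X → ℤ)
    {m : ℕ} (σ : PreSimplex X m) (S : Set X) : Prop :=
  F.IsStratum S ∧ IsFatalIdx F p σ (vtx σ S) ∧
    (((vtx σ S).ncard : ℤ) = (m : ℤ) - F.codim S + p S + 1)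

/-- The `p̄`-defect `ℓ_{p̄}(σ)` : the codimension of the guilty stratum, `0` if `σ` is
of `p̄`-intersection. -/
def defect {X : Type u} [TopologicalSpace X] (F : FilteredSpace X) (p : Set X → ℤ)
    {m : ℕ} (σ : PreSimplex X m) : ℤ :=
  sSup ({0} ∪ {c | ∃ S, IsGuilty F p σ S ∧ c = F.codim S})

/-- The linear simplex with vertices `v j` (a linear self-map of the standard
simplex). -/
def linMap {m : ℕ} (v : Fin (m+1) → TSimp m) : C(TSimp m, TSimp m) where
  toFun t := ⟨fun i => ∑ j, (t : Fin (m+1) → ℝ) j * (v j : Fin (m+1) → ℝ) i, by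
    refine ⟨fun i => ?_, ?_⟩
    · exact Finset.sum_nonneg fun j _ => mul_nonneg (t.2.1 j) ((v j).2.1 i)
    · rw [Finset.sum_comm]
      have he : ∀ j : Fin (m+1),
          (∑ i, (t : Fin (m+1) → ℝ) j * (v j : Fin (m+1) → ℝ) i) = (t : Fin (m+1) → ℝ) j := by
        intro j
        rw [← Finset.mul_sum]
        convert mul_one _ using 2
        exact (v j).2.2
      rw [Finset.sum_congr rfl (fun j _ => he j)]
      exact t.2.2⟩
  continuous_toFun := by
    apply Continuous.subtype_mk
    apply continuous_pi
    intro i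
    apply continuous_finset_sum
    intro j _
    exact ((continuous_apply j).comp continuous_subtype_val).mul continuous_const


/-! ## Auxiliary development for Statement 4 -/

namespace PWL

open Finset

lemma val_succAbove {n : ℕ} (j : Fin (n+1)) (l : Fin n) :
    ((j.succAbove l) : ℕ) = if (l:ℕ) < (j:ℕ) then (l:ℕ) else (l:ℕ)+1 := by
  rw [Fin.succAbove]
  split_ifs with h1 h2 h3 <;> simp_all [Fin.lt_def]

/-- The monotone surjection `Fin (n+2) → Fin (n+1)` identifying `i` and `i+1`. -/
def gam {n : ℕ} (i : Fin (n+1)) (l : Fin (n+2)) : Fin (n+1) :=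
  ⟨if (l:ℕ) ≤ (i:ℕ) then (l:ℕ) else (l:ℕ) - 1, by
    rcases l with ⟨l, hl⟩; rcases i with ⟨i, hi⟩; dsimp only; split_ifs <;> omega⟩

lemma val_gam {n : ℕ} (i : Fin (n+1)) (l : Fin (n+2)) :
    ((gam i l : Fin (n+1)) : ℕ) = if (l:ℕ) ≤ (i:ℕ) then (l:ℕ) else (l:ℕ) - 1 := rfl

lemma gam_monotone {n : ℕ} (i : Fin (n+1)) : Monotone (gam i) := by
  intro a b hab
  rw [Fin.le_def] at hab ⊢
  rw [val_gam, val_gam]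
  split_ifs <;> omega

/-- Coordinate pushforward of a family of reals along a map of index types. -/
def fpush {a b : ℕ} (f : Fin a → Fin b) (u : Fin a → ℝ) : Fin b → ℝ :=
  fun k => ∑ l, if f l = k then u l else 0

lemma fpush_comp {a b c : ℕ} (f : Fin a → Fin b) (g : Fin b → Fin c) (u : Fin a → ℝ) :
    fpush g (fpush f u) = fpush (g ∘ f) u := by
  funext k
  unfold fpush
  have step1 : ∀ l' : Fin b, (if g l' = k then ∑ l, if f l = l' then u l else 0 else 0) =
      ∑ l, if g l' = k then (if f l = l' then u l else 0) else 0 := by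
    intro l'
    split_ifs with h
    · rfl
    · exact (Finset.sum_const_zero).symm
  rw [Finset.sum_congr rfl fun l' _ => step1 l']
  rw [Finset.sum_comm]
  refine Finset.sum_congr rfl fun l _ => ?_
  have step2 : ∀ l' : Fin b, (if g l' = k then (if f l = l' then u l else 0) else 0) =
      (if f l = l' then (if g l' = k then u l else 0) else 0) := by
    intro l'
    split_ifs <;> rfl
  rw [Finset.sum_congr rfl fun l' _ => step2 l', Finset.sum_ite_eq]
  simp [Function.comp]

lemma fpush_filter {a b : ℕ} (f : Fin a → Fin b) (u : Fin a → ℝ) (P : Fin b → Prop)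
    [DecidablePred P] :
    (∑ k, if P k then fpush f u k else 0) = ∑ l, if P (f l) then u l else 0 := by
  unfold fpush
  have step1 : ∀ k : Fin b, (if P k then ∑ l, if f l = k then u l else 0 else 0) =
      ∑ l, if P k then (if f l = k then u l else 0) else 0 := by
    intro k
    split_ifs with h
    · rfl
    · exact (Finset.sum_const_zero).symm
  rw [Finset.sum_congr rfl fun k _ => step1 k]
  rw [Finset.sum_comm]
  refine Finset.sum_congr rfl fun l _ => ?_
  have step2 : ∀ k : Fin b, (if P k then (if f l = k then u l else 0) else 0) =
      (if f l = k then (if P k then u l else 0) else 0) := by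
    intro k
    split_ifs <;> rfl
  rw [Finset.sum_congr rfl fun k _ => step2 k, Finset.sum_ite_eq]
  simp

lemma fpush_sum {a b : ℕ} (f : Fin a → Fin b) (u : Fin a → ℝ) :
    ∑ k, fpush f u k = ∑ l, u l := by
  have := fpush_filter f u (fun _ => True)
  simpa using this

lemma fpush_id {a : ℕ} (u : Fin a → ℝ) : fpush id u = u := by
  funext k
  unfold fpush
  simp [Finset.sum_ite_eq']

lemma fpush_nonneg {a b : ℕ} {f : Fin a → Fin b} {u : Fin a → ℝ} (hu : ∀ l, 0 ≤ u l)
    (k : Fin b) : 0 ≤ fpush f u k :=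
  Finset.sum_nonneg fun l _ => by split_ifs; exacts [hu l, le_rfl]

lemma fpush_ne_zero_iff {a b : ℕ} {f : Fin a → Fin b} {u : Fin a → ℝ}
    (hu : ∀ l, 0 ≤ u l) (k : Fin b) :
    fpush f u k ≠ 0 ↔ ∃ l, f l = k ∧ u l ≠ 0 := by
  constructor
  · intro h
    by_contra hc
    push_neg at hc
    refine h (Finset.sum_eq_zero fun l _ => ?_)
    split_ifs with hf
    · exact hc l hf
    · rfl
  · rintro ⟨l, hfl, hul⟩
    have h1 : (0:ℝ) < u l := lt_of_le_of_ne (hu l) (Ne.symm hul)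
    have hterm : ∀ x ∈ Finset.univ, (0:ℝ) ≤ if f x = k then u x else 0 := by
      intro x _
      split_ifs
      exacts [hu x, le_rfl]
    have h2 : (if f l = k then u l else 0) ≤ fpush f u k :=
      Finset.single_le_sum hterm (Finset.mem_univ l)
    rw [if_pos hfl] at h2
    intro h0
    rw [h0] at h2
    linarith

lemma faceMap_coords {n : ℕ} (j : Fin (n+2)) (u : TSimp n) :
    (faceMap n j u).1 = fpush j.succAbove u.1 := by
  funext k
  simp only [faceMap, ContinuousMap.coe_mk]
  refine Fin.succAboveCases j ?_ ?_ k
  · rw [Fin.insertNth_apply_same]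
    symm
    refine Finset.sum_eq_zero fun l _ => ?_
    rw [if_neg (Fin.succAbove_ne j l)]
  · intro l0
    rw [Fin.insertNth_apply_succAbove]
    unfold fpush
    simp only [Fin.succAbove_right_inj]
    rw [Finset.sum_ite_eq']
    simp

/-- The affine collapse map `Δ^{n+1} → Δ^n` merging vertices `i` and `i+1`. -/
def collapse {n : ℕ} (i : Fin (n+1)) : C(TSimp (n+1), TSimp n) where
  toFun u := ⟨fpush (gam i) u.1, by
    refine ⟨fun k => fpush_nonneg u.2.1 k, ?_⟩
    rw [fpush_sum]
    exact u.2.2⟩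
  continuous_toFun := by
    apply Continuous.subtype_mk
    apply continuous_pi
    intro k
    apply continuous_finset_sum
    intro l _
    by_cases h : gam i l = k
    · simp only [h, if_true]
      exact (continuous_apply l).comp continuous_subtype_val
    · simp only [h, if_false]
      exact continuous_const

lemma collapse_coords {n : ℕ} (i : Fin (n+1)) (u : TSimp (n+1)) :
    (collapse i u).1 = fpush (gam i) u.1 := rfl

/-- The "height" parameter of the prism decomposition. -/
def sParam {n : ℕ} (i : Fin (n+1)) (u : TSimp (n+1)) : ℝ :=
  ∑ l : Fin (n+2), if (i:ℕ) < (l:ℕ) then u.1 l else 0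

lemma sParam_continuous {n : ℕ} (i : Fin (n+1)) : Continuous (sParam (n := n) i) := by
  apply continuous_finset_sum
  intro l _
  by_cases h : (i:ℕ) < (l:ℕ)
  · simp only [h, if_true]
    exact (continuous_apply l).comp continuous_subtype_val
  · simp only [h, if_false]
    exact continuous_const

lemma collapse_face {n : ℕ} (i : Fin (n+1)) (j : Fin (n+2)) (u : TSimp n) :
    (collapse i (faceMap n j u)).1 =
      fpush (gam i ∘ j.succAbove) u.1 := by
  rw [collapse_coords, faceMap_coords, fpush_comp]

lemma sParam_face {n : ℕ} (i : Fin (n+1)) (j : Fin (n+2)) (u : TSimp n) :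
    sParam i (faceMap n j u) =
      ∑ l : Fin (n+1), if (i:ℕ) < ((j.succAbove l : Fin (n+2)) : ℕ) then u.1 l else 0 := by
  unfold sParam
  rw [faceMap_coords]
  exact fpush_filter _ _ _

section Prism

variable {X : Type u} [TopologicalSpace X]

lemma presimplex_eq {m : ℕ} {σ σ' : PreSimplex X m} (h1 : σ.map = σ'.map)
    (h2 : σ.block = σ'.block) : σ = σ' := by
  cases σ; cases σ'; cases h1; cases h2; rfl

/-- The straightening `(t, x) ↦ (z, x)` applied after a simplex, keeping its blocks. -/
def gPre (z : ℝ) {n : ℕ} (τ : PreSimplex (ℝ × X) n) : PreSimplex (ℝ × X) n where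
  map :=
    { toFun := fun t => (z, (τ.map t).2)
      continuous_toFun := continuous_const.prodMk τ.map.continuous.snd }
  block := τ.block

/-- The `i`-th prism simplex over `τ`, for the linear homotopy from the identity to
the straightening `(t,x) ↦ (z,x)`. -/
def prism (z : ℝ) {n : ℕ} (τ : PreSimplex (ℝ × X) n) (i : Fin (n+1)) :
    PreSimplex (ℝ × X) (n+1) where
  map :=
    { toFun := fun u => ((1 - sParam i u) * (τ.map (collapse i u)).1 + sParam i u * z,
        (τ.map (collapse i u)).2)
      continuous_toFun := by
        have hc : Continuous fun u : TSimp (n+1) => τ.map (collapse i u) :=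
          τ.map.continuous.comp (collapse i).continuous
        have hs := sParam_continuous (n := n) i
        exact (((continuous_const.sub hs).mul hc.fst).add (hs.mul continuous_const)).prodMk
          hc.snd }
  block := fun l => τ.block (gam i l)

lemma prism_map_apply (z : ℝ) {n : ℕ} (τ : PreSimplex (ℝ × X) n) (i : Fin (n+1))
    (u : TSimp (n+1)) :
    (prism z τ i).map u = ((1 - sParam i u) * (τ.map (collapse i u)).1 + sParam i u * z,
      (τ.map (collapse i u)).2) := rfl

lemma prism_block (z : ℝ) {n : ℕ} (τ : PreSimplex (ℝ × X) n) (i : Fin (n+1)) :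
    (prism z τ i).block = fun l => τ.block (gam i l) := rfl

lemma prism_glue (z : ℝ) {n : ℕ} (τ : PreSimplex (ℝ × X) n) (i i' : Fin (n+1))
    (j : Fin (n+2)) (h1 : (j:ℕ) = (i:ℕ)+1) (h2 : (i':ℕ) = (i:ℕ)+1) :
    (prism z τ i).face j = (prism z τ i').face j := by
  have hgam : gam i ∘ j.succAbove = gam i' ∘ j.succAbove := by
    funext l
    apply Fin.ext
    simp only [Function.comp_apply, val_gam, val_succAbove]
    split_ifs <;> omega
  apply presimplex_eq
  · apply ContinuousMap.ext
    intro u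
    simp only [PreSimplex.face, ContinuousMap.comp_apply, prism_map_apply]
    have hc : collapse i (faceMap n j u) = collapse i' (faceMap n j u) := by
      apply Subtype.ext
      rw [collapse_face, collapse_face, hgam]
    have hs : sParam i (faceMap n j u) = sParam i' (faceMap n j u) := by
      rw [sParam_face, sParam_face]
      refine Finset.sum_congr rfl fun l _ => ?_
      rw [val_succAbove]
      split_ifs <;> first | rfl | omega
    rw [hc, hs]
  · funext l
    show τ.block (gam i (j.succAbove l)) = τ.block (gam i' (j.succAbove l))
    rw [show gam i (j.succAbove l) = gam i' (j.succAbove l) from congrFun hgam l]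

lemma prism_face_bot (z : ℝ) {n : ℕ} (τ : PreSimplex (ℝ × X) n) (i : Fin (n+1))
    (j : Fin (n+2)) (h1 : (i:ℕ) = 0) (h2 : (j:ℕ) = 0) :
    (prism z τ i).face j = gPre z τ := by
  have hgam : gam i ∘ j.succAbove = id := by
    funext l
    apply Fin.ext
    simp only [Function.comp_apply, val_gam, val_succAbove, id_eq]
    split_ifs <;> omega
  apply presimplex_eq
  · apply ContinuousMap.ext
    intro u
    simp only [PreSimplex.face, ContinuousMap.comp_apply, prism_map_apply]
    have hc : collapse i (faceMap n j u) = u := by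
      apply Subtype.ext
      rw [collapse_face, hgam, fpush_id]
    have hs : sParam i (faceMap n j u) = 1 := by
      rw [sParam_face]
      rw [Finset.sum_congr rfl (fun l _ => if_pos (by rw [val_succAbove]; split_ifs <;> omega))]
      exact u.2.2
    rw [hc, hs]
    show _ = (z, (τ.map u).2)
    norm_num
  · funext l
    show τ.block (gam i (j.succAbove l)) = τ.block l
    rw [show gam i (j.succAbove l) = l from congrFun hgam l]

lemma prism_face_top (z : ℝ) {n : ℕ} (τ : PreSimplex (ℝ × X) n) (i : Fin (n+1))
    (j : Fin (n+2)) (h1 : (i:ℕ) = n) (h2 : (j:ℕ) = n+1) :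
    (prism z τ i).face j = τ := by
  have hgam : gam i ∘ j.succAbove = id := by
    funext l
    apply Fin.ext
    simp only [Function.comp_apply, val_gam, val_succAbove, id_eq]
    have := l.2
    split_ifs <;> omega
  apply presimplex_eq
  · apply ContinuousMap.ext
    intro u
    simp only [PreSimplex.face, ContinuousMap.comp_apply, prism_map_apply]
    have hc : collapse i (faceMap n j u) = u := by
      apply Subtype.ext
      rw [collapse_face, hgam, fpush_id]
    have hs : sParam i (faceMap n j u) = 0 := by
      rw [sParam_face]
      refine Finset.sum_eq_zero fun l _ => ?_
      rw [if_neg]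
      rw [val_succAbove]
      have := l.2
      split_ifs <;> omega
    rw [hc, hs]
    norm_num
  · funext l
    show τ.block (gam i (j.succAbove l)) = τ.block l
    rw [show gam i (j.succAbove l) = l from congrFun hgam l]

lemma prism_face_left (z : ℝ) {n : ℕ} (τ : PreSimplex (ℝ × X) (n+1)) (i : Fin (n+2))
    (j : Fin (n+3)) (j' : Fin (n+2)) (i' : Fin (n+1)) (hj : (j:ℕ) < (i:ℕ))
    (hj' : (j':ℕ) = (j:ℕ)) (hi' : (i':ℕ) + 1 = (i:ℕ)) :
    (prism z τ i).face j = prism z (τ.face j') i' := by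
  have hgam : ∀ l : Fin (n+2), gam i (j.succAbove l) = j'.succAbove (gam i' l) := by
    intro l
    apply Fin.ext
    rw [val_gam, val_succAbove, val_succAbove, val_gam]
    split_ifs <;> omega
  apply presimplex_eq
  · apply ContinuousMap.ext
    intro u
    simp only [PreSimplex.face, ContinuousMap.comp_apply, prism_map_apply]
    have hc : collapse i (faceMap (n+1) j u) = faceMap n j' (collapse i' u) := by
      apply Subtype.ext
      rw [collapse_face, faceMap_coords, collapse_coords, fpush_comp]
      rw [show gam i ∘ j.succAbove = j'.succAbove ∘ gam i' from
        funext fun l => by simpa using hgam l]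
    have hs : sParam i (faceMap (n+1) j u) = sParam i' u := by
      rw [sParam_face]
      unfold sParam
      refine Finset.sum_congr rfl fun l _ => ?_
      rw [val_succAbove]
      split_ifs <;> first | rfl | omega
    rw [hc, hs]
  · funext l
    show τ.block (gam i (j.succAbove l)) = τ.block (j'.succAbove (gam i' l))
    rw [hgam l]

lemma prism_face_right (z : ℝ) {n : ℕ} (τ : PreSimplex (ℝ × X) (n+1)) (i : Fin (n+2))
    (j : Fin (n+3)) (j' : Fin (n+2)) (i' : Fin (n+1)) (hj : (i:ℕ) + 1 < (j:ℕ))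
    (hj' : (j':ℕ) + 1 = (j:ℕ)) (hi' : (i':ℕ) = (i:ℕ)) :
    (prism z τ i).face j = prism z (τ.face j') i' := by
  have hgam : ∀ l : Fin (n+2), gam i (j.succAbove l) = j'.succAbove (gam i' l) := by
    intro l
    apply Fin.ext
    rw [val_gam, val_succAbove, val_succAbove, val_gam]
    split_ifs <;> omega
  apply presimplex_eq
  · apply ContinuousMap.ext
    intro u
    simp only [PreSimplex.face, ContinuousMap.comp_apply, prism_map_apply]
    have hc : collapse i (faceMap (n+1) j u) = faceMap n j' (collapse i' u) := by
      apply Subtype.ext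
      rw [collapse_face, faceMap_coords, collapse_coords, fpush_comp]
      rw [show gam i ∘ j.succAbove = j'.succAbove ∘ gam i' from
        funext fun l => by simpa using hgam l]
    have hs : sParam i (faceMap (n+1) j u) = sParam i' u := by
      rw [sParam_face]
      unfold sParam
      refine Finset.sum_congr rfl fun l _ => ?_
      rw [val_succAbove]
      split_ifs <;> first | rfl | omega
    rw [hc, hs]
  · funext l
    show τ.block (gam i (j.succAbove l)) = τ.block (j'.succAbove (gam i' l))
    rw [hgam l]

end Prism

section Strata

variable {X : Type u} [TopologicalSpace X] (F : FilteredSpace X)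

lemma stratumDim_unique {S : Set X} {i i' : ℤ} (h : F.IsStratumDim S i)
    (h' : F.IsStratumDim S i') : i = i' := by
  obtain ⟨x, hx, rfl⟩ := h
  obtain ⟨y, hy, hS⟩ := h'
  have hxS : x ∈ connectedComponentIn (F.filt i \ F.filt (i-1)) x :=
    mem_connectedComponentIn hx
  have hsub : connectedComponentIn (F.filt i \ F.filt (i-1)) x ⊆
      F.filt i' \ F.filt (i'-1) := by
    rw [hS]
    exact connectedComponentIn_subset _ _
  have hx' := hsub hxS
  by_contra hne
  rcases lt_or_gt_of_ne hne with hlt | hlt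
  · exact hx'.2 (F.filt_mono (by omega : i ≤ i'-1) hx.1)
  · exact hx.2 (F.filt_mono (by omega : i' ≤ i-1) hx'.1)

lemma stratumDim_eq {S : Set X} {i : ℤ} (h : F.IsStratumDim S i) : F.stratumDim S = i := by
  have hex : ∃ i, F.IsStratumDim S i := ⟨i, h⟩
  rw [FilteredSpace.stratumDim, dif_pos hex]
  exact stratumDim_unique F hex.choose_spec h

lemma stratum_nonempty {S : Set X} (h : F.IsStratum S) : S.Nonempty := by
  obtain ⟨i, x, hx, rfl⟩ := h
  exact ⟨x, mem_connectedComponentIn hx⟩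

lemma ccIn_prod (D : Set X) (x : X) (r : ℝ) (hx : x ∈ D) :
    connectedComponentIn ((Set.univ : Set ℝ) ×ˢ D) (r, x) =
      Set.univ ×ˢ connectedComponentIn D x := by
  apply Set.Subset.antisymm
  · intro y hy
    have hK : IsPreconnected (connectedComponentIn ((Set.univ : Set ℝ) ×ˢ D) (r, x)) :=
      isPreconnected_connectedComponentIn
    have him : IsPreconnected
        (Prod.snd '' connectedComponentIn ((Set.univ : Set ℝ) ×ˢ D) (r, x)) :=
      hK.image _ continuous_snd.continuousOn
    have hsub : Prod.snd '' connectedComponentIn ((Set.univ : Set ℝ) ×ˢ D) (r, x) ⊆ D := by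
      rintro _ ⟨w, hw, rfl⟩
      exact (connectedComponentIn_subset _ _ hw).2
    have hxmem : x ∈ Prod.snd '' connectedComponentIn ((Set.univ : Set ℝ) ×ˢ D) (r, x) :=
      ⟨(r, x), mem_connectedComponentIn ⟨Set.mem_univ r, hx⟩, rfl⟩
    have hsnd := him.subset_connectedComponentIn hxmem hsub
    exact ⟨Set.mem_univ _, hsnd ⟨y, hy, rfl⟩⟩
  · apply IsPreconnected.subset_connectedComponentIn
    · exact isPreconnected_univ.prod isPreconnected_connectedComponentIn
    · exact ⟨Set.mem_univ r, mem_connectedComponentIn hx⟩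
    · exact Set.prod_mono (le_refl _) (connectedComponentIn_subset _ _)

lemma mem_filt_prodLeft (y : ℝ × X) (i : ℤ) :
    y ∈ (FilteredSpace.prodLeft ℝ F).filt i ↔ y.2 ∈ F.filt i :=
  ⟨fun h => h.2, fun h => ⟨Set.mem_univ _, h⟩⟩

lemma isStratumDim_prodLeft_iff (T : Set (ℝ × X)) (i : ℤ) :
    (FilteredSpace.prodLeft ℝ F).IsStratumDim T i ↔
      ∃ S, F.IsStratumDim S i ∧ T = Set.univ ×ˢ S := by
  have hdiff : ∀ i : ℤ, (FilteredSpace.prodLeft ℝ F).filt i \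
      (FilteredSpace.prodLeft ℝ F).filt (i-1) =
      (Set.univ : Set ℝ) ×ˢ (F.filt i \ F.filt (i-1)) := by
    intro i
    ext ⟨r, x⟩
    show (r, x) ∈ (Set.univ ×ˢ F.filt i) \ (Set.univ ×ˢ F.filt (i-1)) ↔ _
    simp [Set.mem_prod, Set.mem_diff]
  constructor
  · rintro ⟨⟨r, x⟩, hmem, rfl⟩
    rw [hdiff] at hmem ⊢
    refine ⟨connectedComponentIn (F.filt i \ F.filt (i-1)) x, ⟨x, hmem.2, rfl⟩, ?_⟩
    exact ccIn_prod _ x r hmem.2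
  · rintro ⟨S, ⟨x, hx, rfl⟩, rfl⟩
    refine ⟨(0, x), ?_, ?_⟩
    · rw [hdiff]
      exact ⟨Set.mem_univ _, hx⟩
    · rw [hdiff]
      exact (ccIn_prod _ x 0 hx).symm

lemma isStratum_prodLeft_iff (T : Set (ℝ × X)) :
    (FilteredSpace.prodLeft ℝ F).IsStratum T ↔
      ∃ S, F.IsStratum S ∧ T = Set.univ ×ˢ S := by
  constructor
  · rintro ⟨i, h⟩
    obtain ⟨S, hS, rfl⟩ := (isStratumDim_prodLeft_iff F T i).1 h
    exact ⟨S, ⟨i, hS⟩, rfl⟩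
  · rintro ⟨S, ⟨i, hS⟩, rfl⟩
    exact ⟨i, (isStratumDim_prodLeft_iff F _ i).2 ⟨S, hS, rfl⟩⟩

lemma codim_prodLeft {S : Set X} (h : F.IsStratum S) :
    (FilteredSpace.prodLeft ℝ F).codim (Set.univ ×ˢ S) = F.codim S := by
  obtain ⟨i, hS⟩ := h
  rw [FilteredSpace.codim, FilteredSpace.codim, stratumDim_eq F hS,
      stratumDim_eq _ ((isStratumDim_prodLeft_iff F _ i).2 ⟨S, hS, rfl⟩)]
  rfl

lemma perv_prodLeft (p : Set X → ℤ) (S : Set X) :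
    pervProdLeft (M' := ℝ) p (Set.univ ×ˢ S) = p S := by
  rw [pervProdLeft, Set.snd_image_prod Set.univ_nonempty]

variable (p : Set X → ℤ)

/-- The inclusion `x ↦ (z, x)` as a continuous map. -/
def iotaC (z : ℝ) : C(X, ℝ × X) := ⟨fun x => (z, x), continuous_const.prodMk continuous_id⟩

/-- The projection as a continuous map. -/
def sndC : C(ℝ × X, X) := ⟨Prod.snd, continuous_snd⟩

lemma mapAdmissible_prod_iff {m : ℕ} (τ : C(TSimp m, ℝ × X)) :
    MapAdmissible (FilteredSpace.prodLeft ℝ F) (pervProdLeft p) τ ↔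
      MapAdmissible F p (sndC.comp τ) := by
  constructor
  · intro h S hS t ht
    have hT : (FilteredSpace.prodLeft ℝ F).IsStratum (Set.univ ×ˢ S) :=
      (isStratum_prodLeft_iff F _).2 ⟨S, hS, rfl⟩
    have hb := h _ hT t ⟨Set.mem_univ _, ht⟩
    rwa [codim_prodLeft F hS, perv_prodLeft] at hb
  · intro h T hT t ht
    obtain ⟨S, hS, rfl⟩ := (isStratum_prodLeft_iff F T).1 hT
    have hb := h S hS t ht.2
    rwa [← codim_prodLeft F hS, ← perv_prodLeft p S] at hb

lemma suppCard_eq {m : ℕ} (t : TSimp m)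
    [inst : DecidablePred fun j => (t : Fin (m+1) → ℝ) j ≠ 0] :
    suppCard t = (Finset.univ.filter fun j => (t : Fin (m+1) → ℝ) j ≠ 0).card := by
  unfold suppCard
  rw [Finset.filter_congr_decidable]

lemma suppCard_collapse {n : ℕ} (i : Fin (n+1)) (u : TSimp (n+1)) :
    suppCard u ≤ suppCard (collapse i u) + 1 := by
  classical
  rw [suppCard_eq, suppCard_eq]
  set A := Finset.univ.filter fun j => (u : Fin (n+2) → ℝ) j ≠ 0 with hA
  set B := Finset.univ.filter
    fun j => ((collapse i u : TSimp n) : Fin (n+1) → ℝ) j ≠ 0 with hB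
  have hmaps : ∀ l ∈ A, gam i l ∈ B := by
    intro l hl
    rw [hA, Finset.mem_filter] at hl
    rw [hB, Finset.mem_filter]
    refine ⟨Finset.mem_univ _, ?_⟩
    rw [show ⇑(collapse i u) = fpush (gam i) u.1 from collapse_coords i u, fpush_ne_zero_iff u.2.1]
    exact ⟨l, rfl, hl.2⟩
  set x : Fin (n+2) := ⟨(i:ℕ)+1, by omega⟩ with hx
  have hinj : Set.InjOn (gam i) ↑(A.erase x) := by
    intro a ha b hb hab
    have ha' : a ≠ x := Finset.ne_of_mem_erase ha
    have hb' : b ≠ x := Finset.ne_of_mem_erase hb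
    have hav : (a : ℕ) ≠ (i:ℕ)+1 := fun hc => ha' (Fin.ext hc)
    have hbv : (b : ℕ) ≠ (i:ℕ)+1 := fun hc => hb' (Fin.ext hc)
    have := congrArg (fun w : Fin (n+1) => (w : ℕ)) hab
    simp only [val_gam] at this
    apply Fin.ext
    split_ifs at this <;> omega
  have h1 : (A.erase x).card ≤ B.card := by
    refine Finset.card_le_card_of_injOn (gam i) ?_ hinj
    intro a ha
    exact hmaps a (Finset.mem_of_mem_erase ha)
  by_cases hmem : x ∈ A
  · rw [← Finset.card_erase_add_one hmem]
    omega
  · rw [← Finset.erase_eq_of_notMem hmem]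
    omega

lemma mapAdmissible_prism (z : ℝ) {n : ℕ} {τ : PreSimplex (ℝ × X) n}
    (h : MapAdmissible (FilteredSpace.prodLeft ℝ F) (pervProdLeft p) τ.map) (i : Fin (n+1)) :
    MapAdmissible (FilteredSpace.prodLeft ℝ F) (pervProdLeft p) (prism z τ i).map := by
  intro T hT u hu
  obtain ⟨S, hS, rfl⟩ := (isStratum_prodLeft_iff F T).1 hT
  have hmem : τ.map (collapse i u) ∈ Set.univ ×ˢ S := ⟨Set.mem_univ _, hu.2⟩
  have hb := h _ hT (collapse i u) hmem
  have hcard : ((suppCard u : ℤ)) ≤ (suppCard (collapse i u) : ℤ) + 1 := by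
    exact_mod_cast suppCard_collapse i u
  push_cast
  push_cast at hb
  linarith

lemma mapAdmissible_gPre (z : ℝ) {n : ℕ} {τ : PreSimplex (ℝ × X) n}
    (h : MapAdmissible (FilteredSpace.prodLeft ℝ F) (pervProdLeft p) τ.map) :
    MapAdmissible (FilteredSpace.prodLeft ℝ F) (pervProdLeft p) (gPre z τ).map := by
  intro T hT t ht
  obtain ⟨S, hS, rfl⟩ := (isStratum_prodLeft_iff F T).1 hT
  exact h _ hT t ⟨Set.mem_univ _, ht.2⟩

lemma isFiltered_prism (z : ℝ) {n : ℕ} {τ : PreSimplex (ℝ × X) n}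
    (h : τ.IsFiltered (FilteredSpace.prodLeft ℝ F)) (i : Fin (n+1)) :
    (prism z τ i).IsFiltered (FilteredSpace.prodLeft ℝ F) := by
  constructor
  · exact h.1.comp (gam_monotone i)
  · intro a
    ext u
    simp only [Set.mem_preimage, Set.mem_setOf_eq]
    have hmem : (prism z τ i).map u ∈ (FilteredSpace.prodLeft ℝ F).filt a ↔
        τ.map (collapse i u) ∈ (FilteredSpace.prodLeft ℝ F).filt a := by
      rw [mem_filt_prodLeft, mem_filt_prodLeft, prism_map_apply]
    rw [hmem]
    have h2 := Set.ext_iff.mp (h.2 a) (collapse i u)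
    simp only [Set.mem_preimage, Set.mem_setOf_eq] at h2
    rw [h2]
    constructor
    · intro hh l hl
      refine hh (gam i l) ?_
      rw [show ⇑(collapse i u) = fpush (gam i) u.1 from collapse_coords i u, fpush_ne_zero_iff u.2.1]
      exact ⟨l, rfl, hl⟩
    · intro hh k hk
      rw [show ⇑(collapse i u) = fpush (gam i) u.1 from collapse_coords i u, fpush_ne_zero_iff u.2.1] at hk
      obtain ⟨l, rfl, hl⟩ := hk
      exact hh l hl

lemma isFiltered_gPre (z : ℝ) {n : ℕ} {τ : PreSimplex (ℝ × X) n}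
    (h : τ.IsFiltered (FilteredSpace.prodLeft ℝ F)) :
    (gPre z τ).IsFiltered (FilteredSpace.prodLeft ℝ F) := by
  refine ⟨h.1, fun a => ?_⟩
  have hset : (gPre z τ).map ⁻¹' ((FilteredSpace.prodLeft ℝ F).filt a) =
      τ.map ⁻¹' ((FilteredSpace.prodLeft ℝ F).filt a) := by
    ext t
    simp only [Set.mem_preimage]
    rw [mem_filt_prodLeft, mem_filt_prodLeft]
    exact Iff.rfl
  rw [hset]
  exact h.2 a

lemma isFiltered_iotaPre (z : ℝ) {m : ℕ} {σ : PreSimplex X m} (h : σ.IsFiltered F) :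
    (PreSimplex.mk ((iotaC z).comp σ.map) σ.block).IsFiltered
      (FilteredSpace.prodLeft ℝ F) := by
  refine ⟨h.1, fun a => ?_⟩
  ext t
  have h2 := Set.ext_iff.mp (h.2 a) t
  simp only [Set.mem_preimage, Set.mem_setOf_eq] at h2 ⊢
  simp only [ContinuousMap.comp_apply]
  rw [mem_filt_prodLeft]
  exact h2

lemma isFiltered_sndPre {m : ℕ} {τ : PreSimplex (ℝ × X) m}
    (h : τ.IsFiltered (FilteredSpace.prodLeft ℝ F)) :
    (PreSimplex.mk (sndC.comp τ.map) τ.block).IsFiltered F := by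
  refine ⟨h.1, fun a => ?_⟩
  ext t
  have h2 := Set.ext_iff.mp (h.2 a) t
  simp only [Set.mem_preimage, Set.mem_setOf_eq] at h2 ⊢
  simp only [ContinuousMap.comp_apply, sndC, ContinuousMap.coe_mk]
  rw [← mem_filt_prodLeft F (τ.map t) a]
  exact h2

lemma vert_ne_zero_iff {m : ℕ} (j l : Fin (m+1)) :
    ((vert m j : TSimp m) : Fin (m+1) → ℝ) l ≠ 0 ↔ l = j := by
  show (vert m j).1 l ≠ 0 ↔ l = j
  by_cases h : l = j <;> simp [vert, h]

lemma canonicalBlock_eq_block {W : Type v} [TopologicalSpace W] {FW : FilteredSpace W}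
    {m : ℕ} {σ : PreSimplex W m} (h : σ.IsFiltered FW) :
    canonicalBlock FW σ.map = σ.block := by
  funext j
  have hset : {i : ℤ | σ.map (vert m j) ∈ FW.filt i} = Set.Ici (σ.block j) := by
    ext i
    simp only [Set.mem_setOf_eq, Set.mem_Ici]
    have h2 := Set.ext_iff.mp (h.2 i) (vert m j)
    simp only [Set.mem_preimage, Set.mem_setOf_eq] at h2
    rw [h2]
    constructor
    · intro hh
      exact hh j ((vert_ne_zero_iff j j).2 rfl)
    · intro hb l hl
      rw [vert_ne_zero_iff] at hl
      rw [hl]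
      exact hb
  show sInf _ = _
  rw [hset, csInf_Ici]

lemma canonicalBlock_comp_snd {m : ℕ} (τ : C(TSimp m, ℝ × X)) :
    canonicalBlock F (sndC.comp τ) = canonicalBlock (FilteredSpace.prodLeft ℝ F) τ := by
  funext j
  show sInf _ = sInf _
  congr 1
  ext i
  simp only [Set.mem_setOf_eq, ContinuousMap.comp_apply]
  exact (mem_filt_prodLeft F (τ (vert m j)) i).symm

lemma canonicalBlock_comp_iota (z : ℝ) {m : ℕ} (σ : C(TSimp m, X)) :
    canonicalBlock (FilteredSpace.prodLeft ℝ F) ((iotaC z).comp σ) = canonicalBlock F σ := by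
  funext j
  show sInf _ = sInf _
  congr 1
  ext i
  simp only [Set.mem_setOf_eq, ContinuousMap.comp_apply]
  exact mem_filt_prodLeft F _ i

lemma pushSimp_iota_eq (z : ℝ) {m : ℕ} {σ : PreSimplex X m} (h : σ.IsFiltered F) :
    pushSimp (FilteredSpace.prodLeft ℝ F) (iotaC z) σ =
      ⟨(iotaC z).comp σ.map, σ.block⟩ := by
  refine presimplex_eq ?_ ?_
  · rfl
  show canonicalBlock (FilteredSpace.prodLeft ℝ F) ((iotaC z).comp σ.map) = σ.block
  rw [canonicalBlock_comp_iota, canonicalBlock_eq_block h]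

lemma pushSimp_snd_eq {m : ℕ} {τ : PreSimplex (ℝ × X) m}
    (h : τ.IsFiltered (FilteredSpace.prodLeft ℝ F)) :
    pushSimp F sndC τ = ⟨sndC.comp τ.map, τ.block⟩ := by
  refine presimplex_eq ?_ ?_
  · rfl
  show canonicalBlock F (sndC.comp τ.map) = τ.block
  rw [canonicalBlock_comp_snd, canonicalBlock_eq_block h]

lemma pushSimp_snd_iota (z : ℝ) {m : ℕ} {σ : PreSimplex X m} (h : σ.IsFiltered F) :
    pushSimp F sndC (pushSimp (FilteredSpace.prodLeft ℝ F) (iotaC z) σ) = σ := by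
  rw [pushSimp_iota_eq F z h]
  have hm : sndC.comp ((iotaC z).comp σ.map) = σ.map := ContinuousMap.ext fun t => rfl
  refine presimplex_eq ?_ ?_
  · exact hm
  · show canonicalBlock F (sndC.comp ((iotaC z).comp σ.map)) = σ.block
    rw [hm, canonicalBlock_eq_block h]

lemma pushSimp_iota_snd (z : ℝ) {m : ℕ} {τ : PreSimplex (ℝ × X) m}
    (h : τ.IsFiltered (FilteredSpace.prodLeft ℝ F)) :
    pushSimp (FilteredSpace.prodLeft ℝ F) (iotaC z) (pushSimp F sndC τ) = gPre z τ := by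
  rw [pushSimp_snd_eq F h]
  refine presimplex_eq ?_ ?_
  · exact ContinuousMap.ext fun t => rfl
  · show canonicalBlock (FilteredSpace.prodLeft ℝ F) ((iotaC z).comp (sndC.comp τ.map)) =
      τ.block
    rw [canonicalBlock_comp_iota, canonicalBlock_comp_snd, canonicalBlock_eq_block h]

lemma allowable_iota (z : ℝ) {m : ℕ} {σ : PreSimplex X m} (h : Allowable F p Set.univ σ) :
    Allowable (FilteredSpace.prodLeft ℝ F) (pervProdLeft p) Set.univ
      (pushSimp (FilteredSpace.prodLeft ℝ F) (iotaC z) σ) := by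
  rw [pushSimp_iota_eq F z h.1]
  refine ⟨isFiltered_iotaPre F z h.1, ?_, Set.subset_univ _⟩
  show MapAdmissible _ _ ((iotaC z).comp σ.map)
  rw [mapAdmissible_prod_iff]
  rw [show sndC.comp ((iotaC z).comp σ.map) = σ.map from ContinuousMap.ext fun t => rfl]
  exact h.2.1

lemma allowable_snd {m : ℕ} {τ : PreSimplex (ℝ × X) m}
    (h : Allowable (FilteredSpace.prodLeft ℝ F) (pervProdLeft p) Set.univ τ) :
    Allowable F p Set.univ (pushSimp F sndC τ) := by
  rw [pushSimp_snd_eq F h.1]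
  exact ⟨isFiltered_sndPre F h.1, (mapAdmissible_prod_iff F p τ.map).1 h.2.1,
    Set.subset_univ _⟩

lemma allowable_prism (z : ℝ) {n : ℕ} {τ : PreSimplex (ℝ × X) n}
    (h : Allowable (FilteredSpace.prodLeft ℝ F) (pervProdLeft p) Set.univ τ) (i : Fin (n+1)) :
    Allowable (FilteredSpace.prodLeft ℝ F) (pervProdLeft p) Set.univ (prism z τ i) :=
  ⟨isFiltered_prism F z h.1 i, mapAdmissible_prism F p z h.2.1 i, Set.subset_univ _⟩

lemma allowable_gPre (z : ℝ) {n : ℕ} {τ : PreSimplex (ℝ × X) n}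
    (h : Allowable (FilteredSpace.prodLeft ℝ F) (pervProdLeft p) Set.univ τ) :
    Allowable (FilteredSpace.prodLeft ℝ F) (pervProdLeft p) Set.univ (gPre z τ) :=
  ⟨isFiltered_gPre F z h.1, mapAdmissible_gPre F p z h.2.1, Set.subset_univ _⟩

end Strata

section ChainLevel

variable {X : Type u} {Y : Type v} [TopologicalSpace X] [TopologicalSpace Y]
variable (G : Type w) [AddCommGroup G]

lemma mem_suppIn {S : SimpSystem.{u}} {m : ℕ} {P : S.Gen m → Prop}
    {ξ : S.Chains G m} : ξ ∈ S.suppIn G P ↔ ∀ σ ∈ ξ.support, P σ := Iff.rfl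

lemma single_mem_suppIn (S : SimpSystem.{u}) {m : ℕ} {P : S.Gen m → Prop}
    {σ : S.Gen m} (h : P σ) (g : G) : Finsupp.single σ g ∈ S.suppIn G P := by
  intro τ hτ
  have hmem := Finsupp.support_single_subset hτ
  rw [Finset.mem_singleton] at hmem
  rwa [hmem]

lemma mapDomain_mem_suppIn {α : Type u'} {β : Type v'} {P : α → Prop} {Q : β → Prop}
    (f : α → β) (hf : ∀ a, P a → Q (f a)) (ξ : α →₀ G) (hξ : ∀ σ ∈ ξ.support, P σ) :
    ∀ τ ∈ (Finsupp.mapDomain f ξ).support, Q τ := by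
  classical
  intro τ hτ
  obtain ⟨a, ha, rfl⟩ := Finset.mem_image.mp (Finsupp.mapDomain_support hτ)
  exact hf a (hξ a ha)

lemma bdry_single (S : SimpSystem.{u}) {m : ℕ} (σ : S.Gen (m+1)) (g : G) :
    S.bdry G m (Finsupp.single σ g) =
      ∑ j : Fin (m+2), (-1:ℤ)^(j:ℕ) • Finsupp.single (S.face m j σ) g := by
  rw [SimpSystem.bdry, Finsupp.liftAddHom_apply_single, AddMonoidHom.finset_sum_apply]
  refine Finset.sum_congr rfl fun j _ => ?_
  rw [AddMonoidHom.smul_apply, Finsupp.singleAddHom_apply]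

lemma bdry_single_filt {m : ℕ} (σ : PreSimplex X (m+1)) (g : G) :
    (filtSys X).bdry G m (Finsupp.single σ g) =
      ∑ j : Fin (m+2), (-1:ℤ)^(j:ℕ) • Finsupp.single (σ.face j) g :=
  bdry_single G (filtSys X) σ g

lemma face_vert {m : ℕ} (j : Fin (m+2)) (k : Fin (m+1)) :
    faceMap m j (vert m k) = vert (m+1) (j.succAbove k) := by
  apply Subtype.ext
  rw [faceMap_coords]
  funext l
  show fpush j.succAbove (fun a => if a = k then (1:ℝ) else 0) l
    = if l = j.succAbove k then 1 else 0
  unfold fpush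
  rw [Finset.sum_eq_single k]
  · simp [eq_comm]
  · intro a _ ha
    simp [ha]
  · intro h
    exact absurd (Finset.mem_univ k) h

lemma canonicalBlock_face (F' : FilteredSpace Y) {m : ℕ} (τ : C(TSimp (m+1), Y))
    (j : Fin (m+2)) :
    canonicalBlock F' (τ.comp (faceMap m j)) =
      fun k => canonicalBlock F' τ (j.succAbove k) := by
  funext k
  show sInf _ = sInf _
  congr 1
  ext i
  simp only [Set.mem_setOf_eq, ContinuousMap.comp_apply]
  rw [face_vert]

lemma pushSimp_face (F' : FilteredSpace Y) (g : C(X, Y)) {m : ℕ} (σ : PreSimplex X (m+1))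
    (j : Fin (m+2)) : pushSimp F' g (σ.face j) = (pushSimp F' g σ).face j := by
  refine presimplex_eq ?_ ?_
  · exact (ContinuousMap.comp_assoc g σ.map (faceMap m j)).symm
  · show canonicalBlock F' (g.comp (σ.map.comp (faceMap m j))) =
      canonicalBlock F' (g.comp σ.map) ∘ j.succAbove
    rw [← ContinuousMap.comp_assoc, canonicalBlock_face]
    rfl

lemma pushChain_single (F' : FilteredSpace Y) (g : C(X, Y)) {m : ℕ}
    (σ : PreSimplex X m) (gg : G) :
    pushChain F' g G m (Finsupp.single σ gg) = Finsupp.single (pushSimp F' g σ) gg := by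
  rw [pushChain, Finsupp.mapDomain.addMonoidHom_apply, Finsupp.mapDomain_single]

lemma pushChain_bdry (F' : FilteredSpace Y) (g : C(X, Y)) (m : ℕ)
    (ξ : (filtSys X).Chains G (m+1)) :
    pushChain F' g G m ((filtSys X).bdry G m ξ) =
      (filtSys Y).bdry G m (pushChain F' g G (m+1) ξ) := by
  have key : (pushChain F' g G m).comp ((filtSys X).bdry G m) =
      ((filtSys Y).bdry G m).comp (pushChain F' g G (m+1)) := by
    apply Finsupp.addHom_ext
    intro σ gg
    simp only [AddMonoidHom.comp_apply]
    rw [bdry_single_filt, map_sum, pushChain_single, bdry_single_filt]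
    refine Finset.sum_congr rfl fun j _ => ?_
    rw [map_zsmul, pushChain_single, pushSimp_face]
  exact DFunLike.congr_fun key ξ

lemma pushChain_bdryFrom (F' : FilteredSpace Y) (g : C(X, Y)) (m : ℕ)
    (ξ : (filtSys X).Chains G m) :
    pushChain F' g G (m-1) ((filtSys X).bdryFrom G m ξ) =
      (filtSys Y).bdryFrom G m (pushChain F' g G m ξ) := by
  cases m with
  | zero =>
      show pushChain F' g G 0 ((0 : (filtSys X).Chains G 0 →+ _) ξ) =
        (0 : (filtSys Y).Chains G 0 →+ _) _
      rw [AddMonoidHom.zero_apply, AddMonoidHom.zero_apply, map_zero]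
  | succ m => exact pushChain_bdry G F' g m ξ

end ChainLevel

section PrismChain

variable {X : Type u} [TopologicalSpace X]
variable (G : Type w) [AddCommGroup G]

/-- The prism chain-homotopy operator. -/
def prismHom (z : ℝ) (m : ℕ) :
    (filtSys (ℝ × X)).Chains G m →+ (filtSys (ℝ × X)).Chains G (m+1) :=
  Finsupp.liftAddHom fun τ =>
    ∑ i : Fin (m+1), (-1:ℤ)^(i:ℕ) • Finsupp.singleAddHom (prism z τ i)

lemma prismHom_single (z : ℝ) (m : ℕ) (τ : PreSimplex (ℝ × X) m) (g : G) :
    prismHom G z m (Finsupp.single τ g) =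
      ∑ i : Fin (m+1), (-1:ℤ)^(i:ℕ) • Finsupp.single (prism z τ i) g := by
  rw [prismHom, Finsupp.liftAddHom_apply_single, AddMonoidHom.finset_sum_apply]
  refine Finset.sum_congr rfl fun i _ => ?_
  rw [AddMonoidHom.smul_apply, Finsupp.singleAddHom_apply]

lemma sign_helper1 (a b : ℕ) (ha : 1 ≤ a) :
    ((-1:ℤ)^a * (-1)^b) = -((-1)^b * (-1)^(a-1)) := by
  rw [← pow_add, ← pow_add, show a + b = (b + (a-1)) + 1 from by omega, pow_succ]
  ring

lemma sign_helper2 (a b : ℕ) (hb : 1 ≤ b) :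
    ((-1:ℤ)^a * (-1)^b) = -((-1)^(b-1) * (-1)^a) := by
  rw [← pow_add, ← pow_add, show a + b = ((b-1) + a) + 1 from by omega, pow_succ]
  ring

/-- Reindexing map for the off-diagonal cancellation in the prism identity. -/
def offIdx {n : ℕ} (q : Fin (n+2) × Fin (n+3)) : Fin (n+2) × Fin (n+1) :=
  if (q.2:ℕ) < (q.1:ℕ) then
    (⟨min (q.2:ℕ) (n+1), by omega⟩, ⟨(q.1:ℕ) - 1, by have := q.1.isLt; omega⟩)
  else
    (⟨(q.2:ℕ) - 1, by have := q.2.isLt; omega⟩, ⟨min (q.1:ℕ) n, by omega⟩)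

/-- Inverse reindexing map. -/
def offIdx' {n : ℕ} (q' : Fin (n+2) × Fin (n+1)) : Fin (n+2) × Fin (n+3) :=
  if (q'.1:ℕ) ≤ (q'.2:ℕ) then
    (⟨(q'.2:ℕ)+1, by have := q'.2.isLt; omega⟩, ⟨(q'.1:ℕ), by have := q'.1.isLt; omega⟩)
  else
    (⟨(q'.2:ℕ), by have := q'.2.isLt; omega⟩, ⟨(q'.1:ℕ)+1, by have := q'.1.isLt; omega⟩)

lemma prism_id_zero (z : ℝ) (τ : PreSimplex (ℝ × X) 0) (g : G) :
    (filtSys (ℝ × X)).bdry G 0 (prismHom G z 0 (Finsupp.single τ g)) =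
      Finsupp.single (gPre z τ) g - Finsupp.single τ g := by
  rw [prismHom_single]
  rw [Fin.sum_univ_one]
  simp only [Fin.val_zero, pow_zero, one_smul]
  rw [bdry_single_filt, Fin.sum_univ_two]
  simp only [Fin.val_zero, Fin.val_one, pow_zero, pow_one, one_smul, neg_one_zsmul]
  rw [prism_face_bot z τ 0 0 rfl rfl, prism_face_top z τ 0 1 rfl rfl]
  rw [sub_eq_add_neg]

lemma prism_id_succ (z : ℝ) (n : ℕ) (τ : PreSimplex (ℝ × X) (n+1)) (g : G) :
    (filtSys (ℝ × X)).bdry G (n+1) (prismHom G z (n+1) (Finsupp.single τ g)) +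
      prismHom G z n ((filtSys (ℝ × X)).bdry G n (Finsupp.single τ g)) =
      Finsupp.single (gPre z τ) g - Finsupp.single τ g := by
  classical
  set T : Fin (n+2) → Fin (n+3) → (filtSys (ℝ × X)).Chains G (n+1) := fun i j =>
    (-1:ℤ)^(i:ℕ) • ((-1:ℤ)^(j:ℕ) • Finsupp.single ((prism z τ i).face j) g) with hT
  set U : Fin (n+2) → Fin (n+1) → (filtSys (ℝ × X)).Chains G (n+1) := fun j i' =>
    (-1:ℤ)^(j:ℕ) • ((-1:ℤ)^(i':ℕ) • Finsupp.single (prism z (τ.face j) i') g) with hU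
  have e1 : (filtSys (ℝ × X)).bdry G (n+1) (prismHom G z (n+1) (Finsupp.single τ g)) =
      ∑ i : Fin (n+2), ∑ j : Fin (n+3), T i j := by
    rw [prismHom_single, map_sum]
    refine Finset.sum_congr rfl fun i _ => ?_
    rw [map_zsmul, bdry_single_filt, Finset.smul_sum]
  have e2 : prismHom G z n ((filtSys (ℝ × X)).bdry G n (Finsupp.single τ g)) =
      ∑ j : Fin (n+2), ∑ i' : Fin (n+1), U j i' := by
    rw [bdry_single_filt, map_sum]
    refine Finset.sum_congr rfl fun j _ => ?_
    rw [map_zsmul, prismHom_single, Finset.smul_sum]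
  rw [e1, e2]
  rw [← Finset.sum_product' (s := Finset.univ) (t := Finset.univ) (f := fun i j => T i j)]
  rw [← Finset.sum_product' (s := Finset.univ) (t := Finset.univ) (f := fun j i' => U j i')]
  rw [← Finset.sum_filter_add_sum_filter_not (Finset.univ ×ˢ Finset.univ)
    (fun q : Fin (n+2) × Fin (n+3) => (q.2:ℕ) = (q.1:ℕ) ∨ (q.2:ℕ) = (q.1:ℕ)+1)
    (fun q => T q.1 q.2)]
  -- off-diagonal cancellation
  have claim_off : ∑ q ∈ (Finset.univ ×ˢ Finset.univ).filter
      (fun q : Fin (n+2) × Fin (n+3) => ¬((q.2:ℕ) = (q.1:ℕ) ∨ (q.2:ℕ) = (q.1:ℕ)+1)),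
      T q.1 q.2 = ∑ q' ∈ Finset.univ ×ˢ Finset.univ, -U q'.1 q'.2 := by
    refine Finset.sum_nbij' offIdx offIdx' ?_ ?_ ?_ ?_ ?_
    · intro q _
      exact Finset.mem_product.mpr ⟨Finset.mem_univ _, Finset.mem_univ _⟩
    · intro q' _
      have hb1 := q'.1.isLt
      have hb2 := q'.2.isLt
      simp only [Finset.mem_filter, Finset.mem_product, Finset.mem_univ, true_and,
        and_true]
      unfold offIdx'
      split_ifs with h <;> dsimp only <;> omega
    · intro q hq
      have hb1 := q.1.isLt
      have hb2 := q.2.isLt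
      simp only [Finset.mem_filter, Finset.mem_product, Finset.mem_univ, true_and,
        not_or] at hq
      unfold offIdx
      split_ifs with h1 <;>
        (unfold offIdx'
         dsimp only
         split_ifs <;>
           (rw [Prod.ext_iff]
            constructor <;> apply Fin.ext <;> dsimp only <;> omega))
    · intro q' _
      have hb1 := q'.1.isLt
      have hb2 := q'.2.isLt
      unfold offIdx'
      split_ifs with h1 <;>
        (unfold offIdx
         dsimp only
         split_ifs <;>
           (rw [Prod.ext_iff]
            constructor <;> apply Fin.ext <;> dsimp only <;> omega))
    · intro q hq
      have hb1 := q.1.isLt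
      have hb2 := q.2.isLt
      simp only [Finset.mem_filter, Finset.mem_product, Finset.mem_univ, true_and,
        not_or] at hq
      rcases lt_or_gt_of_ne hq.1 with hlt | hgt
      · -- q.2 < q.1 : left region
        have hface : (prism z τ q.1).face q.2 =
            prism z (τ.face ⟨(q.2:ℕ), by omega⟩) ⟨(q.1:ℕ)-1, by omega⟩ :=
          prism_face_left z τ q.1 q.2 _ _ hlt rfl (by dsimp only; omega)
        have hoff : offIdx q = (⟨(q.2:ℕ), by omega⟩, ⟨(q.1:ℕ)-1, by omega⟩) := by
          unfold offIdx
          rw [if_pos hlt]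
          rw [Prod.ext_iff]
          constructor <;> apply Fin.ext <;> dsimp only <;> omega
        rw [hoff, hT, hU]
        dsimp only
        rw [hface, smul_smul, smul_smul, ← neg_smul]
        congr 1
        exact sign_helper1 (q.1:ℕ) (q.2:ℕ) (by omega)
      · -- q.1 + 1 < q.2 : right region
        have hge : (q.1:ℕ) + 1 < (q.2:ℕ) := by omega
        have hface : (prism z τ q.1).face q.2 =
            prism z (τ.face ⟨(q.2:ℕ)-1, by omega⟩) ⟨(q.1:ℕ), by omega⟩ :=
          prism_face_right z τ q.1 q.2 _ _ hge (by dsimp only; omega) rfl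
        have hoff : offIdx q = (⟨(q.2:ℕ)-1, by omega⟩, ⟨(q.1:ℕ), by omega⟩) := by
          unfold offIdx
          rw [if_neg (by omega)]
          rw [Prod.ext_iff]
          constructor <;> apply Fin.ext <;> dsimp only <;> omega
        rw [hoff, hT, hU]
        dsimp only
        rw [hface, smul_smul, smul_smul, ← neg_smul]
        congr 1
        exact sign_helper2 (q.1:ℕ) (q.2:ℕ) (by omega)
  rw [claim_off, Finset.sum_neg_distrib]
  -- diagonal telescope
  have claim_diag : ∑ q ∈ (Finset.univ ×ˢ Finset.univ).filter
      (fun q : Fin (n+2) × Fin (n+3) => (q.2:ℕ) = (q.1:ℕ) ∨ (q.2:ℕ) = (q.1:ℕ)+1),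
      T q.1 q.2 = Finsupp.single (gPre z τ) g - Finsupp.single τ g := by
    set DD : ℕ → PreSimplex (ℝ × X) (n+1) := fun a =>
      (prism z τ ⟨min a (n+1), by omega⟩).face ⟨min a (n+2), by omega⟩ with hDD
    have hsplit : (Finset.univ ×ˢ Finset.univ).filter
        (fun q : Fin (n+2) × Fin (n+3) => (q.2:ℕ) = (q.1:ℕ) ∨ (q.2:ℕ) = (q.1:ℕ)+1) =
        ((Finset.univ ×ˢ Finset.univ).filter
          (fun q : Fin (n+2) × Fin (n+3) => (q.2:ℕ) = (q.1:ℕ))) ∪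
        ((Finset.univ ×ˢ Finset.univ).filter
          (fun q : Fin (n+2) × Fin (n+3) => (q.2:ℕ) = (q.1:ℕ)+1)) :=
      Finset.filter_or _ _ _
    have hdisj : Disjoint ((Finset.univ ×ˢ Finset.univ).filter
        (fun q : Fin (n+2) × Fin (n+3) => (q.2:ℕ) = (q.1:ℕ)))
        ((Finset.univ ×ˢ Finset.univ).filter
          (fun q : Fin (n+2) × Fin (n+3) => (q.2:ℕ) = (q.1:ℕ)+1)) := by
      rw [Finset.disjoint_left]
      intro q h1 h2
      rw [Finset.mem_filter] at h1 h2
      omega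
    rw [hsplit, Finset.sum_union hdisj]
    have hd1 : ∑ q ∈ (Finset.univ ×ˢ Finset.univ).filter
        (fun q : Fin (n+2) × Fin (n+3) => (q.2:ℕ) = (q.1:ℕ)), T q.1 q.2 =
        ∑ i : Fin (n+2), Finsupp.single (DD (i:ℕ)) g := by
      refine Finset.sum_nbij' (fun q => q.1)
        (fun i => (i, ⟨(i:ℕ), by have := i.isLt; omega⟩)) ?_ ?_ ?_ ?_ ?_
      · intro q _
        exact Finset.mem_univ _
      · intro i _
        simp [Finset.mem_filter]
      · intro q hq
        rw [Finset.mem_filter] at hq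
        rw [Prod.ext_iff]
        exact ⟨rfl, Fin.ext (by simpa using hq.2.symm)⟩
      · intro i _
        rfl
      · intro q hq
        rw [Finset.mem_filter] at hq
        have hb1 := q.1.isLt
        have hq2 : q.2 = ⟨(q.1:ℕ), by omega⟩ := Fin.ext hq.2
        have hface : (prism z τ q.1).face q.2 = DD ((q.1:ℕ)) := by
          rw [hDD]
          dsimp only
          rw [hq2]
          rw [show (⟨min (q.1:ℕ) (n+1), by omega⟩ : Fin (n+2)) = q.1 from
            Fin.ext (by dsimp only; omega)]
          rw [show (⟨min (q.1:ℕ) (n+2), by omega⟩ : Fin (n+3)) =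
              (⟨(q.1:ℕ), by omega⟩ : Fin (n+3)) from Fin.ext (by dsimp only; omega)]
        rw [hT]
        dsimp only
        rw [hface, smul_smul, hq.2]
        rw [show ((-1:ℤ)^(q.1:ℕ) * (-1)^(q.1:ℕ)) = 1 from by
          rw [← pow_add]; exact Even.neg_one_pow ⟨(q.1:ℕ), by omega⟩]
        rw [one_smul]
    have hDDsucc : ∀ i : Fin (n+2),
        (prism z τ i).face ⟨(i:ℕ)+1, by have := i.isLt; omega⟩ = DD ((i:ℕ)+1) := by
      intro i
      have hb := i.isLt
      rw [hDD]
      dsimp only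
      by_cases hi : (i:ℕ) < n+1
      · have h1 : (⟨min ((i:ℕ)+1) (n+1), by omega⟩ : Fin (n+2)) = ⟨(i:ℕ)+1, by omega⟩ := by
          apply Fin.ext
          simp
          omega
        have h2 : (⟨min ((i:ℕ)+1) (n+2), by omega⟩ : Fin (n+3)) = ⟨(i:ℕ)+1, by omega⟩ := by
          apply Fin.ext
          simp
          omega
        rw [h1, h2]
        exact prism_glue z τ i ⟨(i:ℕ)+1, by omega⟩ ⟨(i:ℕ)+1, by omega⟩ rfl rfl
      · have hieq : (i:ℕ) = n+1 := by omega
        have h1 : (⟨min ((i:ℕ)+1) (n+1), by omega⟩ : Fin (n+2)) = i := by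
          apply Fin.ext
          dsimp only
          omega
        have h2 : (⟨min ((i:ℕ)+1) (n+2), by omega⟩ : Fin (n+3)) =
            ⟨(i:ℕ)+1, by omega⟩ := by
          apply Fin.ext
          dsimp only
          omega
        rw [h1, h2]
    have hd2 : ∑ q ∈ (Finset.univ ×ˢ Finset.univ).filter
        (fun q : Fin (n+2) × Fin (n+3) => (q.2:ℕ) = (q.1:ℕ)+1), T q.1 q.2 =
        ∑ i : Fin (n+2), -Finsupp.single (DD ((i:ℕ)+1)) g := by
      refine Finset.sum_nbij' (fun q => q.1)
        (fun i => (i, ⟨(i:ℕ)+1, by have := i.isLt; omega⟩)) ?_ ?_ ?_ ?_ ?_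
      · intro q _
        exact Finset.mem_univ _
      · intro i _
        simp [Finset.mem_filter]
      · intro q hq
        rw [Finset.mem_filter] at hq
        rw [Prod.ext_iff]
        exact ⟨rfl, Fin.ext (by simpa using hq.2.symm)⟩
      · intro i _
        rfl
      · intro q hq
        rw [Finset.mem_filter] at hq
        have hb1 := q.1.isLt
        have hq2 : q.2 = ⟨(q.1:ℕ)+1, by omega⟩ := Fin.ext hq.2
        rw [hT]
        dsimp only
        rw [smul_smul, hq.2]
        rw [show ((-1:ℤ)^(q.1:ℕ) * (-1)^((q.1:ℕ)+1)) = -1 from by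
          rw [← pow_add]; exact Odd.neg_one_pow ⟨(q.1:ℕ), by omega⟩]
        rw [neg_one_zsmul, hq2, hDDsucc q.1]
    rw [hd1, hd2, ← Finset.sum_add_distrib]
    have hterm : ∀ i : Fin (n+2), Finsupp.single (DD (i:ℕ)) g +
        -Finsupp.single (DD ((i:ℕ)+1)) g =
        Finsupp.single (DD (i:ℕ)) g - Finsupp.single (DD ((i:ℕ)+1)) g := fun i =>
      (sub_eq_add_neg _ _).symm
    rw [Finset.sum_congr rfl fun i _ => hterm i]
    rw [Fin.sum_univ_eq_sum_range
      (fun a => Finsupp.single (DD a) g - Finsupp.single (DD (a+1)) g) (n+2)]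
    rw [Finset.sum_range_sub' (fun a => Finsupp.single (DD a) g) (n+2)]
    have hD0 : DD 0 = gPre z τ := by
      rw [hDD]
      exact prism_face_bot z τ _ _ (by simp) (by simp)
    have hDtop : DD (n+2) = τ := by
      rw [hDD]
      exact prism_face_top z τ _ _ (by simp) (by simp)
    rw [hD0, hDtop]
  rw [claim_diag]
  abel

end PrismChain

section ChainIdentity

variable {X : Type u} [TopologicalSpace X]
variable (G : Type w) [AddCommGroup G]

lemma prismHom_mem_suppIn (z : ℝ) {m : ℕ} {P : PreSimplex (ℝ × X) m → Prop}
    {Q : PreSimplex (ℝ × X) (m+1) → Prop}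
    (hPQ : ∀ τ i, P τ → Q (prism z τ i)) {ξ : (filtSys (ℝ × X)).Chains G m}
    (hξ : ξ ∈ (filtSys (ℝ × X)).suppIn G P) :
    prismHom G z m ξ ∈ (filtSys (ℝ × X)).suppIn G Q := by
  classical
  have hdecomp : ξ = ξ.sum (fun σ g => Finsupp.single σ g) := (Finsupp.sum_single ξ).symm
  rw [hdecomp, map_finsuppSum, Finsupp.sum]
  apply AddSubgroup.sum_mem
  intro σ hσ
  rw [prismHom_single]
  apply AddSubgroup.sum_mem
  intro i _
  apply AddSubgroup.zsmul_mem
  exact single_mem_suppIn G _ (hPQ σ i (hξ σ hσ)) _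

lemma prism_identity_cycle (z : ℝ) (k : ℕ) (ξ : (filtSys (ℝ × X)).Chains G k)
    (hcyc : (filtSys (ℝ × X)).bdryFrom G k ξ = 0) :
    (filtSys (ℝ × X)).bdryFrom G (k+1) (prismHom G z k ξ) =
      Finsupp.mapDomain (gPre z) ξ - ξ := by
  cases k with
  | zero =>
    show (filtSys (ℝ × X)).bdry G 0 (prismHom G z 0 ξ) = _
    have key : ((filtSys (ℝ × X)).bdry G 0).comp (prismHom G z 0) =
        (Finsupp.mapDomain.addMonoidHom (gPre z) : _ →+ _) - AddMonoidHom.id _ := by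
      apply Finsupp.addHom_ext
      intro τ g
      simp only [AddMonoidHom.comp_apply, AddMonoidHom.sub_apply, AddMonoidHom.id_apply,
        Finsupp.mapDomain.addMonoidHom_apply, Finsupp.mapDomain_single]
      exact prism_id_zero G z τ g
    have hkey := DFunLike.congr_fun key ξ
    simpa [Finsupp.mapDomain.addMonoidHom_apply] using hkey
  | succ n =>
    show (filtSys (ℝ × X)).bdry G (n+1) (prismHom G z (n+1) ξ) = _
    have hc : (filtSys (ℝ × X)).bdry G n ξ = 0 := hcyc
    have key : ((filtSys (ℝ × X)).bdry G (n+1)).comp (prismHom G z (n+1)) +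
        (prismHom G z n).comp ((filtSys (ℝ × X)).bdry G n) =
        (Finsupp.mapDomain.addMonoidHom (gPre z) : _ →+ _) - AddMonoidHom.id _ := by
      apply Finsupp.addHom_ext
      intro τ g
      simp only [AddMonoidHom.add_apply, AddMonoidHom.comp_apply, AddMonoidHom.sub_apply,
        AddMonoidHom.id_apply, Finsupp.mapDomain.addMonoidHom_apply,
        Finsupp.mapDomain_single]
      exact prism_id_succ G z n τ g
    have hkey := DFunLike.congr_fun key ξ
    simp only [AddMonoidHom.add_apply, AddMonoidHom.comp_apply, AddMonoidHom.sub_apply,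
      AddMonoidHom.id_apply, Finsupp.mapDomain.addMonoidHom_apply] at hkey
    rw [hc, map_zero, add_zero] at hkey
    exact hkey

variable (F : FilteredSpace X) (p : Set X → ℤ) (z : ℝ)

lemma mem_iChains {F : FilteredSpace X} {p : Set X → ℤ} {W : Set X} {m : ℕ}
    {ξ : (filtSys X).Chains G m} :
    ξ ∈ iChains F p G W m ↔
      ξ ∈ (filtSys X).suppIn G (fun σ : PreSimplex X m => Allowable F p W σ) ∧
      (filtSys X).bdryFrom G m ξ ∈
        (filtSys X).suppIn G (fun σ : PreSimplex X (m-1) => Allowable F p W σ) := by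
  rw [iChains, AddSubgroup.mem_inf, AddSubgroup.mem_comap]

lemma pushChain_iota_iChains (m : ℕ) {ξ : (filtSys X).Chains G m}
    (hξ : ξ ∈ iChains F p G Set.univ m) :
    pushChain (FilteredSpace.prodLeft ℝ F) (iotaC z) G m ξ ∈
      iChains (FilteredSpace.prodLeft ℝ F) (pervProdLeft p) G Set.univ m := by
  rw [mem_iChains] at hξ ⊢
  constructor
  · exact mapDomain_mem_suppIn G _ (fun σ hσ => allowable_iota F p z hσ) ξ hξ.1
  · rw [← pushChain_bdryFrom]
    exact mapDomain_mem_suppIn G _ (fun σ hσ => allowable_iota F p z hσ) _ hξ.2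

lemma pushChain_snd_iChains (m : ℕ) {η : (filtSys (ℝ × X)).Chains G m}
    (hη : η ∈ iChains (FilteredSpace.prodLeft ℝ F) (pervProdLeft p) G Set.univ m) :
    pushChain F sndC G m η ∈ iChains F p G Set.univ m := by
  rw [mem_iChains] at hη ⊢
  constructor
  · exact mapDomain_mem_suppIn G _ (fun σ hσ => allowable_snd F p hσ) η hη.1
  · rw [← pushChain_bdryFrom]
    exact mapDomain_mem_suppIn G _ (fun σ hσ => allowable_snd F p hσ) _ hη.2

lemma pushChain_comp_id (m : ℕ) {ξ : (filtSys X).Chains G m}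
    (hξ : ξ ∈ (filtSys X).suppIn G (fun σ : PreSimplex X m => Allowable F p Set.univ σ)) :
    pushChain F sndC G m (pushChain (FilteredSpace.prodLeft ℝ F) (iotaC z) G m ξ) = ξ := by
  show Finsupp.mapDomain _ (Finsupp.mapDomain _ ξ) = ξ
  rw [← Finsupp.mapDomain_comp]
  have hcongr := Finsupp.mapDomain_congr (v := ξ)
    (f := pushSimp F sndC ∘ pushSimp (FilteredSpace.prodLeft ℝ F) (iotaC z)) (g := id)
    (fun σ hσ => pushSimp_snd_iota F z (hξ σ hσ).1)
  rw [hcongr]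
  exact Finsupp.mapDomain_id

lemma pushChain_iota_snd_eq (m : ℕ) {η : (filtSys (ℝ × X)).Chains G m}
    (hη : η ∈ (filtSys (ℝ × X)).suppIn G
      (fun σ : PreSimplex (ℝ × X) m =>
        Allowable (FilteredSpace.prodLeft ℝ F) (pervProdLeft p) Set.univ σ)) :
    pushChain (FilteredSpace.prodLeft ℝ F) (iotaC z) G m (pushChain F sndC G m η) =
      Finsupp.mapDomain (gPre z) η := by
  show Finsupp.mapDomain _ (Finsupp.mapDomain _ η) = _
  rw [← Finsupp.mapDomain_comp]
  exact Finsupp.mapDomain_congr fun σ hσ => pushSimp_iota_snd F z (hη σ hσ).1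

lemma prismHom_iChains (k : ℕ) {η : (filtSys (ℝ × X)).Chains G k}
    (hη : η ∈ iChains (FilteredSpace.prodLeft ℝ F) (pervProdLeft p) G Set.univ k)
    (hcyc : (filtSys (ℝ × X)).bdryFrom G k η = 0) :
    prismHom G z k η ∈
      iChains (FilteredSpace.prodLeft ℝ F) (pervProdLeft p) G Set.univ (k+1) := by
  rw [mem_iChains] at hη ⊢
  constructor
  · exact prismHom_mem_suppIn G z (fun τ i hτ => allowable_prism F p z hτ i) hη.1
  · show (filtSys (ℝ × X)).bdryFrom G (k+1) _ ∈ _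
    rw [prism_identity_cycle G z k η hcyc]
    refine AddSubgroup.sub_mem _ ?_ hη.1
    exact mapDomain_mem_suppIn G _ (fun τ hτ => allowable_gPre F p z hτ) η hη.1

end ChainIdentity

section GenericInduced

variable {C : ℕ → Type u'} [∀ m, AddCommGroup (C m)] {D : ℕ → Type v'}
  [∀ m, AddCommGroup (D m)]

lemma mem_relCycles_bot (d : ∀ m, C m →+ C (m-1)) (A : ∀ m, AddSubgroup (C m)) (m : ℕ)
    (ξ : C m) :
    ξ ∈ relCycles d A (fun _ => ⊥) m ↔ ξ ∈ A m ∧ d m ξ = 0 := by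
  rw [relCycles, AddSubgroup.mem_inf, AddSubgroup.mem_comap, AddSubgroup.mem_bot]

variable (d : ∀ m, C m →+ C (m-1)) (d' : ∀ m, D m →+ D (m-1))
  (A : ∀ m, AddSubgroup (C m)) (A' : ∀ m, AddSubgroup (D m))
  (f : ∀ m, C m →+ D m)
  (hcomm : ∀ m ξ, f (m-1) (d m ξ) = d' m (f m ξ))
  (hA : ∀ m ξ, ξ ∈ A m → f m ξ ∈ A' m)

lemma hcl_congr {B : ∀ m, AddSubgroup (C m)} (m : ℕ) {ξ ξ' : C m}
    (hval : ξ = ξ') (h : ξ ∈ relCycles d A B m) (h' : ξ' ∈ relCycles d A B m) :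
    hcl d A B ξ h = hcl d A B ξ' h' := by
  subst hval
  rfl

include hcomm hA

lemma relCycles_push {m : ℕ} {ξ : C m} (hξ : ξ ∈ relCycles d A (fun _ => ⊥) m) :
    f m ξ ∈ relCycles d' A' (fun _ => ⊥) m := by
  rw [mem_relCycles_bot] at hξ ⊢
  refine ⟨hA m ξ hξ.1, ?_⟩
  rw [← hcomm m ξ, hξ.2, map_zero]

/-- Restriction of a chain map to relative cycles. -/
def cycRestrict (m : ℕ) :
    relCycles d A (fun _ => ⊥) m →+ relCycles d' A' (fun _ => ⊥) m :=
  AddMonoidHom.mk'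
    (fun x => ⟨f m x.1, relCycles_push d d' A A' f hcomm hA x.2⟩)
    (fun a b => Subtype.ext (map_add (f m) a.1 b.1))

/-- The homomorphism induced in homology by a chain map. -/
def chainInduced (m : ℕ) :
    relHomology d A (fun _ => ⊥) m →+ relHomology d' A' (fun _ => ⊥) m :=
  QuotientAddGroup.map _ _ (cycRestrict d d' A A' f hcomm hA m) (by
    intro x hx
    rw [AddSubgroup.mem_addSubgroupOf] at hx
    rw [AddSubgroup.mem_comap, AddSubgroup.mem_addSubgroupOf]
    have hx1 : (x : C m) ∈ AddSubgroup.map (d (m+1)) (A (m+1)) ⊔ (⊥ : AddSubgroup (C m)) :=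
      hx.1
    constructor
    · rcases (AddSubgroup.mem_sup.mp hx1) with ⟨y, hy, b, hb, hyb⟩
      rw [AddSubgroup.mem_bot] at hb
      rcases AddSubgroup.mem_map.mp hy with ⟨ζ, hζ, hζy⟩
      refine (le_sup_left :
        AddSubgroup.map (d' (m+1)) (A' (m+1)) ≤ _) ?_
      rw [AddSubgroup.mem_map]
      refine ⟨f (m+1) ζ, hA (m+1) ζ hζ, ?_⟩
      have h2 : y = (x : C m) := by rw [← hyb, hb, add_zero]
      exact ((hcomm (m+1) ζ).symm.trans (congrArg (f m) hζy)).trans (congrArg (f m) h2)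
    · exact (relCycles_push d d' A A' f hcomm hA x.2 :)
    )

lemma chainInduced_hcl (m : ℕ) (ξ : C m) (h : ξ ∈ relCycles d A (fun _ => ⊥) m)
    (h' : f m ξ ∈ relCycles d' A' (fun _ => ⊥) m) :
    chainInduced d d' A A' f hcomm hA m (hcl d A (fun _ => ⊥) ξ h) =
      hcl d' A' (fun _ => ⊥) (f m ξ) h' := by
  unfold chainInduced hcl
  rw [QuotientAddGroup.map_mk]
  rfl

end GenericInduced

end PWL

/-! ## STATEMENT 4 : `H_k^{p̄}(ℝ × X; G) ≅ H_k^{p̄}(X; G)`, induced by the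
inclusion `ι_z` and by the projection. -/

theorem product_with_line
    {X : Type u} [TopologicalSpace X] [T2Space X]
    (F : FilteredSpace X) (hX : F.IsStratifiedSpace)
    (p : Set X → ℤ) (hp : F.IsPerversity p)
    (G : Type w) [AddCommGroup G] (z : ℝ) (k : ℕ) :
    InducesIso ((filtSys X).bdryFrom G) (fun m => iChains F p G Set.univ m)
      (fun _ => ⊥) ((filtSys (ℝ × X)).bdryFrom G)
      (fun m => iChains (FilteredSpace.prodLeft ℝ F) (pervProdLeft p) G Set.univ m)
      (fun _ => ⊥) k
      (pushChain (FilteredSpace.prodLeft ℝ F)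
        ⟨fun x => (z, x), continuous_const.prodMk continuous_id⟩ G k) ∧
    InducesIso ((filtSys (ℝ × X)).bdryFrom G)
      (fun m => iChains (FilteredSpace.prodLeft ℝ F) (pervProdLeft p) G Set.univ m)
      (fun _ => ⊥)
      ((filtSys X).bdryFrom G) (fun m => iChains F p G Set.univ m) (fun _ => ⊥) k
      (pushChain F ⟨Prod.snd, continuous_snd⟩ G k) := by
  classical
  have hcommι : ∀ m (ξ : (filtSys X).Chains G m),
      pushChain (FilteredSpace.prodLeft ℝ F) (PWL.iotaC z) G (m-1)
        ((filtSys X).bdryFrom G m ξ) =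
      (filtSys (ℝ × X)).bdryFrom G m
        (pushChain (FilteredSpace.prodLeft ℝ F) (PWL.iotaC z) G m ξ) :=
    fun m ξ => PWL.pushChain_bdryFrom G (FilteredSpace.prodLeft ℝ F) (PWL.iotaC z) m ξ
  have hcommπ : ∀ m (η : (filtSys (ℝ × X)).Chains G m),
      pushChain F PWL.sndC G (m-1) ((filtSys (ℝ × X)).bdryFrom G m η) =
      (filtSys X).bdryFrom G m (pushChain F PWL.sndC G m η) :=
    fun m η => PWL.pushChain_bdryFrom G F PWL.sndC m η
  have hAι : ∀ m (ξ : (filtSys X).Chains G m), ξ ∈ iChains F p G Set.univ m →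
      pushChain (FilteredSpace.prodLeft ℝ F) (PWL.iotaC z) G m ξ ∈
        iChains (FilteredSpace.prodLeft ℝ F) (pervProdLeft p) G Set.univ m :=
    fun m ξ h => PWL.pushChain_iota_iChains G F p z m h
  have hAπ : ∀ m (η : (filtSys (ℝ × X)).Chains G m),
      η ∈ iChains (FilteredSpace.prodLeft ℝ F) (pervProdLeft p) G Set.univ m →
      pushChain F PWL.sndC G m η ∈ iChains F p G Set.univ m :=
    fun m η h => PWL.pushChain_snd_iChains G F p m h
  set Φ := PWL.chainInduced ((filtSys X).bdryFrom G) ((filtSys (ℝ × X)).bdryFrom G)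
    (fun m => iChains F p G Set.univ m)
    (fun m => iChains (FilteredSpace.prodLeft ℝ F) (pervProdLeft p) G Set.univ m)
    (fun m => pushChain (FilteredSpace.prodLeft ℝ F) (PWL.iotaC z) G m)
    hcommι hAι k with hΦdef
  set Ψ := PWL.chainInduced ((filtSys (ℝ × X)).bdryFrom G) ((filtSys X).bdryFrom G)
    (fun m => iChains (FilteredSpace.prodLeft ℝ F) (pervProdLeft p) G Set.univ m)
    (fun m => iChains F p G Set.univ m)
    (fun m => pushChain F PWL.sndC G m)
    hcommπ hAπ k with hΨdef
  -- class of ι∘π pushforward equals original class (prism homotopy)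
  have hhom : ∀ (η : (filtSys (ℝ × X)).Chains G k)
      (hη : η ∈ relCycles ((filtSys (ℝ × X)).bdryFrom G)
        (fun m => iChains (FilteredSpace.prodLeft ℝ F) (pervProdLeft p) G Set.univ m)
        (fun _ => ⊥) k)
      (h' : pushChain (FilteredSpace.prodLeft ℝ F) (PWL.iotaC z) G k
          (pushChain F PWL.sndC G k η) ∈ relCycles ((filtSys (ℝ × X)).bdryFrom G)
        (fun m => iChains (FilteredSpace.prodLeft ℝ F) (pervProdLeft p) G Set.univ m)
        (fun _ => ⊥) k),
      hcl ((filtSys (ℝ × X)).bdryFrom G)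
        (fun m => iChains (FilteredSpace.prodLeft ℝ F) (pervProdLeft p) G Set.univ m)
        (fun _ => ⊥)
        (pushChain (FilteredSpace.prodLeft ℝ F) (PWL.iotaC z) G k
          (pushChain F PWL.sndC G k η)) h' =
      hcl ((filtSys (ℝ × X)).bdryFrom G)
        (fun m => iChains (FilteredSpace.prodLeft ℝ F) (pervProdLeft p) G Set.univ m)
        (fun _ => ⊥) η hη := by
    intro η hη h'
    have hη' := (PWL.mem_relCycles_bot ((filtSys (ℝ × X)).bdryFrom G) _ k η).1 hη
    have hcyc0 : (filtSys (ℝ × X)).bdryFrom G k η = 0 := hη'.2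
    have hηA : η ∈ iChains (FilteredSpace.prodLeft ℝ F) (pervProdLeft p) G Set.univ k :=
      hη'.1
    have hsupp : η ∈ (filtSys (ℝ × X)).suppIn G
        (fun σ : PreSimplex (ℝ × X) k =>
          Allowable (FilteredSpace.prodLeft ℝ F) (pervProdLeft p) Set.univ σ) :=
      ((PWL.mem_iChains G).1 hηA).1
    have hgd : pushChain (FilteredSpace.prodLeft ℝ F) (PWL.iotaC z) G k
        (pushChain F PWL.sndC G k η) = Finsupp.mapDomain (PWL.gPre z) η :=
      PWL.pushChain_iota_snd_eq G F p z k hsupp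
    have hid := PWL.prism_identity_cycle G z k η hcyc0
    unfold hcl
    rw [QuotientAddGroup.eq]
    rw [AddSubgroup.mem_addSubgroupOf]
    simp only [AddSubgroup.coe_add, AddSubgroup.coe_neg]
    refine AddSubgroup.mem_inf.mpr ⟨?_, ?_⟩
    · refine (le_sup_left : AddSubgroup.map ((filtSys (ℝ × X)).bdryFrom G (k+1))
        (iChains (FilteredSpace.prodLeft ℝ F) (pervProdLeft p) G Set.univ (k+1)) ≤
        relBnds ((filtSys (ℝ × X)).bdryFrom G)
          (fun m => iChains (FilteredSpace.prodLeft ℝ F) (pervProdLeft p) G Set.univ m)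
          (fun _ => ⊥) k) ?_
      rw [AddSubgroup.mem_map]
      refine ⟨-(PWL.prismHom G z k η),
        neg_mem (PWL.prismHom_iChains G F p z k hηA hcyc0), ?_⟩
      refine (map_neg _ _).trans ?_
      refine (congrArg Neg.neg hid).trans ?_
      rw [hgd]
      abel
    · exact add_mem (neg_mem h') hη
  have hΨΦ : ∀ x, Ψ (Φ x) = x := by
    intro x
    refine QuotientAddGroup.induction_on x ?_
    rintro ⟨ξ, hξ⟩
    have hξA : ξ ∈ iChains F p G Set.univ k :=
      ((PWL.mem_relCycles_bot ((filtSys X).bdryFrom G) _ k ξ).1 hξ).1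
    have h'1 : pushChain (FilteredSpace.prodLeft ℝ F) (PWL.iotaC z) G k ξ ∈
        relCycles ((filtSys (ℝ × X)).bdryFrom G)
        (fun m => iChains (FilteredSpace.prodLeft ℝ F) (pervProdLeft p) G Set.univ m)
        (fun _ => ⊥) k :=
      PWL.relCycles_push _ _ _ _ _ hcommι hAι hξ
    have h'2 : pushChain F PWL.sndC G k
        (pushChain (FilteredSpace.prodLeft ℝ F) (PWL.iotaC z) G k ξ) ∈
        relCycles ((filtSys X).bdryFrom G) (fun m => iChains F p G Set.univ m)
        (fun _ => ⊥) k :=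
      PWL.relCycles_push _ _ _ _ _ hcommπ hAπ h'1
    show Ψ (Φ (hcl ((filtSys X).bdryFrom G) (fun m => iChains F p G Set.univ m)
      (fun _ => ⊥) ξ hξ)) = hcl ((filtSys X).bdryFrom G)
      (fun m => iChains F p G Set.univ m) (fun _ => ⊥) ξ hξ
    rw [hΦdef, PWL.chainInduced_hcl _ _ _ _ _ hcommι hAι k ξ hξ h'1]
    rw [hΨdef, PWL.chainInduced_hcl _ _ _ _ _ hcommπ hAπ k _ h'1 h'2]
    exact PWL.hcl_congr _ _ k
      (PWL.pushChain_comp_id G F p z k ((PWL.mem_iChains G).1 hξA).1) h'2 hξ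
  have hΦΨ : ∀ y, Φ (Ψ y) = y := by
    intro y
    refine QuotientAddGroup.induction_on y ?_
    rintro ⟨η, hη⟩
    have h'1 : pushChain F PWL.sndC G k η ∈
        relCycles ((filtSys X).bdryFrom G) (fun m => iChains F p G Set.univ m)
        (fun _ => ⊥) k :=
      PWL.relCycles_push _ _ _ _ _ hcommπ hAπ hη
    have h'2 : pushChain (FilteredSpace.prodLeft ℝ F) (PWL.iotaC z) G k
        (pushChain F PWL.sndC G k η) ∈
        relCycles ((filtSys (ℝ × X)).bdryFrom G)
        (fun m => iChains (FilteredSpace.prodLeft ℝ F) (pervProdLeft p) G Set.univ m)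
        (fun _ => ⊥) k :=
      PWL.relCycles_push _ _ _ _ _ hcommι hAι h'1
    show Φ (Ψ (hcl ((filtSys (ℝ × X)).bdryFrom G)
      (fun m => iChains (FilteredSpace.prodLeft ℝ F) (pervProdLeft p) G Set.univ m)
      (fun _ => ⊥) η hη)) = hcl ((filtSys (ℝ × X)).bdryFrom G)
      (fun m => iChains (FilteredSpace.prodLeft ℝ F) (pervProdLeft p) G Set.univ m)
      (fun _ => ⊥) η hη
    rw [hΨdef, PWL.chainInduced_hcl _ _ _ _ _ hcommπ hAπ k η hη h'1]
    rw [hΦdef, PWL.chainInduced_hcl _ _ _ _ _ hcommι hAι k _ h'1 h'2]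
    exact hhom η hη h'2
  let φ : relHomology ((filtSys X).bdryFrom G) (fun m => iChains F p G Set.univ m)
      (fun _ => ⊥) k ≃+ relHomology ((filtSys (ℝ × X)).bdryFrom G)
      (fun m => iChains (FilteredSpace.prodLeft ℝ F) (pervProdLeft p) G Set.univ m)
      (fun _ => ⊥) k :=
    { toFun := ⇑Φ
      invFun := ⇑Ψ
      left_inv := hΨΦ
      right_inv := hΦΨ
      map_add' := Φ.map_add }
  constructor
  · refine ⟨φ, ?_⟩
    intro ξ h h'
    show Φ (hcl ((filtSys X).bdryFrom G) (fun m => iChains F p G Set.univ m)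
      (fun _ => ⊥) ξ h) = _
    rw [hΦdef]
    exact PWL.chainInduced_hcl _ _ _ _ _ hcommι hAι k ξ h h'
  · refine ⟨φ.symm, ?_⟩
    intro η h h'
    apply φ.injective
    rw [AddEquiv.apply_symm_apply]
    have h'2 : pushChain (FilteredSpace.prodLeft ℝ F) (PWL.iotaC z) G k
        (pushChain F PWL.sndC G k η) ∈
        relCycles ((filtSys (ℝ × X)).bdryFrom G)
        (fun m => iChains (FilteredSpace.prodLeft ℝ F) (pervProdLeft p) G Set.univ m)
        (fun _ => ⊥) k :=
      PWL.relCycles_push _ _ _ _ _ hcommι hAι h'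
    have hstep : φ (hcl ((filtSys X).bdryFrom G) (fun m => iChains F p G Set.univ m)
        (fun _ => ⊥) (pushChain F PWL.sndC G k η) h') =
        hcl ((filtSys (ℝ × X)).bdryFrom G)
        (fun m => iChains (FilteredSpace.prodLeft ℝ F) (pervProdLeft p) G Set.univ m)
        (fun _ => ⊥) (pushChain (FilteredSpace.prodLeft ℝ F) (PWL.iotaC z) G k
          (pushChain F PWL.sndC G k η)) h'2 :=
      PWL.chainInduced_hcl ((filtSys X).bdryFrom G) ((filtSys (ℝ × X)).bdryFrom G)
        (fun m => iChains F p G Set.univ m)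
        (fun m => iChains (FilteredSpace.prodLeft ℝ F) (pervProdLeft p) G Set.univ m)
        (fun m => pushChain (FilteredSpace.prodLeft ℝ F) (PWL.iotaC z) G m)
        hcommι hAι k (pushChain F PWL.sndC G k η) h' h'2
    exact (hstep.trans (hhom η h h'2)).symm

end
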